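/- arXiv:2103.06174 — 2 statements merged into one kernel-verified Lean document; each statement's English description precedes it below -/
import Mathlib

section
/- Let A and B be n×n complex matrices with A strictly contractive, i.e., I − A*A (equivalently I − AA*) is positive definite, and let H = (A − B)* (I − AA*)^{−1} (A − B). Then for every 1 ≤ k ≤ n, ∏_{t=1}^k λ_{n−t+1}(H) ≥ ∏_{t=1}^k σ_{n−t+1}(A − B)^2 / (1 − λ_{n−t+1}(A*A)). -/
open Matrix
open scoped ComplexOrder

/-- The `t`-th largest eigenvalue (0-indexed) of a Hermitian matrix
(junk value `0` if the matrix is not Hermitian). -/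
noncomputable def eigval {n : ℕ} (A : Matrix (Fin n) (Fin n) ℂ) (t : Fin n) : ℝ :=
  if h : A.IsHermitian then h.eigenvalues (Tuple.sort h.eigenvalues t.rev) else 0

/-- The `t`-th largest singular value (0-indexed) of a square complex matrix. -/
noncomputable def singval {n : ℕ} (X : Matrix (Fin n) (Fin n) ℂ) (t : Fin n) : ℝ :=
  Real.sqrt (eigval (Xᴴ * X) t)

noncomputable section

/-- ascending sorted tuple -/
def sTup {n : ℕ} (w : Fin n → ℝ) : Fin n → ℝ := w ∘ Tuple.sort w

lemma sTup_mono {n : ℕ} (w : Fin n → ℝ) : Monotone (sTup w) := Tuple.monotone_sort w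

lemma sTup_comp_perm {n : ℕ} (w : Fin n → ℝ) (σ : Equiv.Perm (Fin n))
    (h : Monotone (w ∘ σ)) : sTup w = w ∘ σ :=
  ((Tuple.comp_sort_eq_comp_iff_monotone).2 h).symm

/-- sorting an "antitone transform" reverses order -/
lemma sTup_antitone_comp {n : ℕ} (w : Fin n → ℝ) (φ : ℝ → ℝ)
    (hφ : ∀ i j : Fin n, w i ≤ w j → φ (w j) ≤ φ (w i)) (j : Fin n) :
    sTup (φ ∘ w) j = φ (sTup w j.rev) := by
  have : sTup (φ ∘ w) = (φ ∘ w) ∘ (Fin.revPerm.trans (Tuple.sort w)) := by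
    apply sTup_comp_perm
    intro a b hab
    exact hφ _ _ (sTup_mono w (Fin.rev_le_rev.2 hab))
  rw [this]; rfl

/-- tuples with the same multiset of values (witnessed by matching products of linear factors)
have the same sorted versions -/
lemma sTup_eq_of_prod_eq {n : ℕ} (a b : Fin n → ℝ)
    (h : ∀ x : ℂ, x ≠ 0 → ∏ i, (x - (a i : ℂ)) = ∏ i, (x - (b i : ℂ))) :
    sTup a = sTup b := by
  classical
  -- polynomials
  set p : Polynomial ℂ := ((List.ofFn fun i => (a i : ℂ)).map
    fun r => Polynomial.X - Polynomial.C r).prod with hp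
  set q : Polynomial ℂ := ((List.ofFn fun i => (b i : ℂ)).map
    fun r => Polynomial.X - Polynomial.C r).prod with hq
  have hev : ∀ (c : Fin n → ℝ) (x : ℂ),
      Polynomial.eval x ((List.ofFn fun i => (c i : ℂ)).map
        fun r => Polynomial.X - Polynomial.C r).prod = ∏ i, (x - (c i : ℂ)) := by
    intro c x
    rw [Polynomial.eval_list_prod, List.map_map, ← List.prod_ofFn (f := fun i => x - (c i : ℂ))]
    congr 1
    rw [List.map_ofFn]
    congr 1
    funext i
    simp
  have hpq : p = q := by
    apply Polynomial.eq_of_infinite_eval_eq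
    apply Set.Infinite.mono (s := {x : ℂ | x ≠ 0})
    · intro x hx
      simp only [Set.mem_setOf_eq] at hx ⊢
      rw [hp, hq, hev, hev]
      exact h x hx
    · have : ({x : ℂ | x ≠ 0}) = {(0:ℂ)}ᶜ := by ext x; simp
      rw [this]
      exact Set.Finite.infinite_compl (Set.finite_singleton 0)
  -- roots
  have hroots : ∀ (c : Fin n → ℝ),
      ((List.ofFn fun i => (c i : ℂ)).map
        fun r => Polynomial.X - Polynomial.C r).prod.roots
      = (List.ofFn fun i => (c i : ℂ) : Multiset ℂ) := by
    intro c
    have := Polynomial.roots_multiset_prod_X_sub_C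
      ((List.ofFn fun i => (c i : ℂ)) : Multiset ℂ)
    simpa using this
  have hmul : (List.ofFn fun i => (a i : ℂ) : Multiset ℂ)
      = (List.ofFn fun i => (b i : ℂ) : Multiset ℂ) := by
    rw [← hroots a, ← hroots b, ← hp, ← hq, hpq]
  -- strip the coercion
  have hmulR : (List.ofFn a : Multiset ℝ) = (List.ofFn b : Multiset ℝ) := by
    apply Multiset.map_injective (f := fun r : ℝ => (r : ℂ)) Complex.ofReal_injective
    have e1 : ∀ c : Fin n → ℝ, Multiset.map (fun r : ℝ => (r : ℂ)) (List.ofFn c : Multiset ℝ)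
        = (List.ofFn fun i => (c i : ℂ) : Multiset ℂ) := by
      intro c
      rw [Multiset.map_coe, List.map_ofFn]
      rfl
    rw [e1, e1, hmul]
  -- permutation
  have hperm : (List.ofFn a).Perm (List.ofFn b) := Multiset.coe_eq_coe.1 hmulR
  have hperm2 : (List.ofFn (sTup a)).Perm (List.ofFn (sTup b)) :=
    (((Tuple.sort a).ofFn_comp_perm a).trans hperm).trans
      ((Tuple.sort b).ofFn_comp_perm b).symm
  have := List.Perm.eq_of_sortedLE
    ((List.sortedLE_ofFn_iff).2 (sTup_mono a)) ((List.sortedLE_ofFn_iff).2 (sTup_mono b)) hperm2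
  exact List.ofFn_injective this

noncomputable section

/-- expansion of det of a product (ungrouped Cauchy-Binet) -/
lemma cb1 {k n : ℕ} (A : Matrix (Fin k) (Fin n) ℂ) (B : Matrix (Fin n) (Fin k) ℂ) :
    (A * B).det = ∑ f : Fin k → Fin n, (A.submatrix id f).det * ∏ i, B (f i) i := by
  classical
  rw [det_apply']
  have h1 : ∀ σ : Equiv.Perm (Fin k), ∏ i, (A * B) (σ i) i
      = ∑ f : Fin k → Fin n, ∏ i, (A (σ i) (f i) * B (f i) i) := by
    intro σ
    simp_rw [mul_apply]
    rw [Finset.prod_univ_sum]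
    rfl
  simp_rw [h1, Finset.mul_sum]
  rw [Finset.sum_comm]
  congr 1
  funext f
  rw [det_apply', Finset.sum_mul]
  congr 1
  funext σ
  rw [mul_assoc]
  congr 1
  rw [← Finset.prod_mul_distrib]
  rfl

abbrev SubsetsCard (n k : ℕ) := {s : Finset (Fin n) // s.card = k}

/-- the order embedding of a subset -/
def semb {n k : ℕ} (s : SubsetsCard n k) : Fin k → Fin n := s.1.orderEmbOfFin s.2

lemma semb_inj {n k : ℕ} (s : SubsetsCard n k) : Function.Injective (semb s) :=
  (s.1.orderEmbOfFin s.2).injective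

lemma semb_strictMono {n k : ℕ} (s : SubsetsCard n k) : StrictMono (semb s) :=
  (s.1.orderEmbOfFin s.2).strictMono

/-- grouped Cauchy-Binet -/
lemma cb2 {k n : ℕ} (A : Matrix (Fin k) (Fin n) ℂ) (B : Matrix (Fin n) (Fin k) ℂ) :
    (A * B).det = ∑ s : SubsetsCard n k,
      (A.submatrix id (semb s)).det * (B.submatrix (semb s) id).det := by
  classical
  rw [cb1]
  -- restrict to injective functions
  rw [← Finset.sum_filter_of_ne (p := fun f : Fin k → Fin n => Function.Injective f)
    (by
      intro f _ hf
      by_contra hinj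
      apply hf
      obtain ⟨i, j, hij, hne⟩ : ∃ i j, f i = f j ∧ i ≠ j := by
        simp only [Function.Injective] at hinj
        push_neg at hinj
        obtain ⟨i, j, h1, h2⟩ := hinj
        exact ⟨i, j, h1, h2⟩
      have : (A.submatrix id f).det = 0 := by
        apply det_zero_of_column_eq hne
        intro r
        simp [hij]
      rw [this, zero_mul])]
  -- bijection with pairs (σ, s)
  rw [← Finset.sum_bij (s := (Finset.univ : Finset (Equiv.Perm (Fin k) × SubsetsCard n k)))
    (i := fun p _ => fun i => semb p.2 (p.1 i))
    (hi := by
      intro p _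
      simp only [Finset.mem_filter, Finset.mem_univ, true_and]
      exact (semb_inj p.2).comp p.1.injective)
    (i_inj := by
      intro p _ p' _ hpp
      have himg : p.2 = p'.2 := by
        apply Subtype.ext
        have : ∀ (q : Equiv.Perm (Fin k) × SubsetsCard n k) (x : Fin n),
            x ∈ q.2.1 ↔ ∃ i, semb q.2 (q.1 i) = x := by
          intro q x
          constructor
          · intro hx
            have : x ∈ Set.range (q.2.1.orderEmbOfFin q.2.2) := by
              rw [Finset.range_orderEmbOfFin]; exact hx
            obtain ⟨i, hi⟩ := this
            exact ⟨q.1.symm i, by simpa [semb] using hi⟩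
          · rintro ⟨i, rfl⟩
            exact Finset.orderEmbOfFin_mem _ _ _
        ext x
        rw [this p x, this p' x]
        have hpp' : ∀ i, semb p.2 (p.1 i) = semb p'.2 (p'.1 i) := fun i => congrFun hpp i
        constructor
        · rintro ⟨i, hi⟩; exact ⟨i, (hpp' i).symm.trans hi⟩
        · rintro ⟨i, hi⟩; exact ⟨i, (hpp' i).trans hi⟩
      have hperm : p.1 = p'.1 := by
        apply Equiv.ext
        intro i
        apply semb_inj p'.2
        have hpp' : semb p.2 (p.1 i) = semb p'.2 (p'.1 i) := congrFun hpp i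
        rwa [himg] at hpp'
      exact Prod.ext hperm himg
    )
    (i_surj := by
      intro f hf
      rw [Finset.mem_filter] at hf
      have hinj := hf.2
      set s : Finset (Fin n) := Finset.univ.image f with hs
      have hcard : s.card = k := by
        rw [hs, Finset.card_image_of_injective _ hinj, Finset.card_univ, Fintype.card_fin]
      set e : Fin k ≃ {x // x ∈ s} := Equiv.ofBijective
        (fun i => ⟨f i, by simp [hs]⟩)
        (by
          constructor
          · intro i j hij
            exact hinj (by simpa using congrArg Subtype.val hij)
          · rintro ⟨x, hx⟩
            rw [hs] at hx
            obtain ⟨i, _, hi⟩ := Finset.mem_image.1 hx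
            exact ⟨i, by simp [hi]⟩) with he
      set o := s.orderIsoOfFin hcard with ho
      refine ⟨⟨e.trans o.toEquiv.symm, ⟨s, hcard⟩⟩, Finset.mem_univ _, ?_⟩
      funext i
      show semb ⟨s, hcard⟩ ((e.trans o.toEquiv.symm) i) = f i
      have h3 : semb ⟨s, hcard⟩ ((e.trans o.toEquiv.symm) i)
          = ↑(o (o.toEquiv.symm (e i))) := (Finset.coe_orderIsoOfFin_apply s hcard _).symm
      rw [h3]
      simp [he]
      rfl
    )
    (h := by intro p _; rfl)]
  -- now sum over pairs
  rw [Fintype.sum_prod_type_right]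
  congr 1
  funext s
  have hterm : ∀ σ : Equiv.Perm (Fin k),
      (A.submatrix id fun i => semb s (σ i)).det * ∏ i, B (semb s (σ i)) i
      = (A.submatrix id (semb s)).det *
        (((Equiv.Perm.sign σ : ℤ) : ℂ) * ∏ i, (B.submatrix (semb s) id) (σ i) i) := by
    intro σ
    have h2 : (A.submatrix id fun i => semb s (σ i)) =
        (A.submatrix id (semb s)).submatrix id σ := rfl
    rw [h2, det_permute']
    simp only [submatrix_apply, id_eq]
    ring
  simp_rw [hterm]
  rw [← Finset.mul_sum]
  congr 1
  rw [det_apply']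

/-- weighted Cauchy-Binet for Gram-type matrices -/
lemma cb3 {k n : ℕ} (X : Matrix (Fin n) (Fin k) ℂ) (d : Fin n → ℂ) :
    (Xᴴ * diagonal d * X).det = ∑ s : SubsetsCard n k,
      (∏ j, d (semb s j)) *
        Complex.normSq ((X.submatrix (semb s) id).det) := by
  classical
  rw [Matrix.mul_assoc, cb2]
  congr 1
  funext s
  have h1 : (diagonal d * X).submatrix (semb s) id
      = diagonal (d ∘ semb s) * (X.submatrix (semb s) id) := by
    ext i j
    simp [mul_apply, diagonal_apply, Finset.sum_ite_eq, (semb_inj s).eq_iff]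
  have h0 : Xᴴ.submatrix id (semb s) = (X.submatrix (semb s) id)ᴴ := rfl
  rw [h1, h0, det_mul, det_conjTranspose, det_diagonal, Complex.normSq_eq_conj_mul_self]
  simp only [Complex.star_def, Function.comp]
  ring


lemma strictMono_le_apply {k n : ℕ} (hkn : k ≤ n) (f : Fin k → Fin n) (hf : StrictMono f)
    (t : Fin k) : (Fin.castLE hkn t : Fin n) ≤ f t := by
  rw [Fin.le_def]
  simp only [Fin.coe_castLE]
  have key : ∀ m (hm : m < k), m ≤ (f ⟨m, hm⟩ : ℕ) := by
    intro m
    induction m with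
    | zero => intro hm; exact Nat.zero_le _
    | succ m ih =>
        intro hm
        have hmk : m < k := Nat.lt_of_succ_lt hm
        have hlt : f ⟨m, hmk⟩ < f ⟨m + 1, hm⟩ := hf (by simp [Fin.lt_def])
        have := ih hmk
        omega
  exact key t.1 t.2

lemma minprod {k n : ℕ} (hkn : k ≤ n) (d : Fin n → ℝ) (hd : ∀ i, 0 ≤ d i)
    (g : Fin k → Fin n) (hg : Function.Injective g) :
    ∏ t : Fin k, sTup d (Fin.castLE hkn t) ≤ ∏ j, d (g j) := by
  classical
  set g' : Fin k → Fin n := fun j => (Tuple.sort d).symm (g j) with hg'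
  have hg'inj : Function.Injective g' := fun i j h => hg ((Tuple.sort d).symm.injective h)
  have h1 : ∀ j, d (g j) = sTup d (g' j) := by
    intro j
    simp [sTup, hg', Function.comp]
  simp_rw [h1]
  set h : Fin k → Fin k := ⇑(Tuple.sort g') with hh
  have h2 : ∏ j, sTup d (g' j) = ∏ j, sTup d (g' (h j)) :=
    (Equiv.prod_comp (Tuple.sort g') (fun j => sTup d (g' j))).symm
  rw [h2]
  have hsm : StrictMono (g' ∘ h) :=
    (Tuple.monotone_sort g').strictMono_of_injective (hg'inj.comp (Equiv.injective _))
  apply Finset.prod_le_prod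
  · intro t _
    exact hd _
  · intro t _
    exact sTup_mono d (strictMono_le_apply hkn _ hsm t)

lemma det_unitary_conj {n : ℕ} (U : Matrix.unitaryGroup (Fin n) ℂ)
    (M : Matrix (Fin n) (Fin n) ℂ) :
    ((U : Matrix (Fin n) (Fin n) ℂ) * M * star (U : Matrix (Fin n) (Fin n) ℂ)).det = M.det := by
  rw [det_mul, det_mul]
  have h1 : (U : Matrix (Fin n) (Fin n) ℂ).det * M.det * (star (U : Matrix (Fin n) (Fin n) ℂ)).det
      = M.det * ((U : Matrix (Fin n) (Fin n) ℂ) * star (U : Matrix (Fin n) (Fin n) ℂ)).det := by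
    rw [det_mul]; ring
  rw [h1, Matrix.mem_unitaryGroup_iff.1 U.2, det_one, mul_one]

lemma det_smul_one_sub_conj {n : ℕ} (U : Matrix.unitaryGroup (Fin n) ℂ) (w : Fin n → ℝ)
    (x : ℂ) :
    (x • (1 : Matrix (Fin n) (Fin n) ℂ)
        - (U : Matrix (Fin n) (Fin n) ℂ) * Matrix.diagonal (fun i => (w i : ℂ))
          * star (U : Matrix (Fin n) (Fin n) ℂ)).det
      = ∏ i, (x - (w i : ℂ)) := by
  have key : x • (1 : Matrix (Fin n) (Fin n) ℂ)
        - (U : Matrix (Fin n) (Fin n) ℂ) * Matrix.diagonal (fun i => (w i : ℂ))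
          * star (U : Matrix (Fin n) (Fin n) ℂ)
      = (U : Matrix (Fin n) (Fin n) ℂ) * Matrix.diagonal (fun i => x - (w i : ℂ))
          * star (U : Matrix (Fin n) (Fin n) ℂ) := by
    have hdg : Matrix.diagonal (fun i => x - (w i : ℂ))
        = x • (1 : Matrix (Fin n) (Fin n) ℂ) - Matrix.diagonal (fun i => (w i : ℂ)) := by
      ext i j
      by_cases h : i = j
      · subst h; simp
      · simp [Matrix.diagonal_apply_ne _ h, Matrix.one_apply_ne h]
    rw [hdg, Matrix.mul_sub, Matrix.sub_mul]
    congr 1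
    rw [Matrix.mul_smul, Matrix.mul_one, Matrix.smul_mul,
      Matrix.mem_unitaryGroup_iff.1 U.2]
  rw [key, det_unitary_conj, det_diagonal]

/-- sorted eigenvalues of a hermitian matrix -/
noncomputable def sE {n : ℕ} {X : Matrix (Fin n) (Fin n) ℂ} (hX : X.IsHermitian) : Fin n → ℝ :=
  sTup hX.eigenvalues

lemma eigval_eq {n : ℕ} {X : Matrix (Fin n) (Fin n) ℂ} (hX : X.IsHermitian) (t : Fin n) :
    eigval X t = sE hX t.rev := by
  rw [eigval, dif_pos hX]; rfl

lemma eigval_rev_eq {n : ℕ} {X : Matrix (Fin n) (Fin n) ℂ} (hX : X.IsHermitian) (j : Fin n) :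
    eigval X j.rev = sE hX j := by
  rw [eigval_eq hX, Fin.rev_rev]

lemma charpoly_prod {n : ℕ} {X : Matrix (Fin n) (Fin n) ℂ} (hX : X.IsHermitian) (x : ℂ) :
    (x • (1 : Matrix (Fin n) (Fin n) ℂ) - X).det = ∏ i, (x - (hX.eigenvalues i : ℂ)) := by
  nth_rewrite 1 [hX.spectral_theorem]
  exact det_smul_one_sub_conj hX.eigenvectorUnitary hX.eigenvalues x

/-- master lemma: if `X = U diag(w) U*` then the sorted eigenvalues of `X` are `sTup w`. -/
lemma sE_eq_sTup {n : ℕ} (U : Matrix.unitaryGroup (Fin n) ℂ) (w : Fin n → ℝ)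
    {X : Matrix (Fin n) (Fin n) ℂ}
    (hXU : X = (U : Matrix (Fin n) (Fin n) ℂ) * Matrix.diagonal (fun i => (w i : ℂ))
      * star (U : Matrix (Fin n) (Fin n) ℂ))
    (hX : X.IsHermitian) : sE hX = sTup w := by
  apply sTup_eq_of_prod_eq
  intro x _
  rw [← charpoly_prod hX, hXU, det_smul_one_sub_conj]

lemma sE_one_sub {n : ℕ} {X : Matrix (Fin n) (Fin n) ℂ} (hX : X.IsHermitian)
    (h1 : ((1 : Matrix (Fin n) (Fin n) ℂ) - X).IsHermitian) (j : Fin n) :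
    sE h1 j = 1 - sE hX j.rev := by
  have key : (1 : Matrix (Fin n) (Fin n) ℂ) - X
      = (hX.eigenvectorUnitary : Matrix (Fin n) (Fin n) ℂ)
        * Matrix.diagonal (fun i => ((1 - hX.eigenvalues i : ℝ) : ℂ))
        * star (hX.eigenvectorUnitary : Matrix (Fin n) (Fin n) ℂ) := by
    have hdg : Matrix.diagonal (fun i => ((1 - hX.eigenvalues i : ℝ) : ℂ))
        = 1 - Matrix.diagonal (fun i => (hX.eigenvalues i : ℂ)) := by
      ext i j
      by_cases h : i = j
      · subst h; simp
      · simp [Matrix.diagonal_apply_ne _ h, Matrix.one_apply_ne h]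
    rw [hdg, Matrix.mul_sub, Matrix.sub_mul, Matrix.mul_one,
      Matrix.mem_unitaryGroup_iff.1 hX.eigenvectorUnitary.2]
    congr 1
    exact hX.spectral_theorem
  have h2 := sE_eq_sTup hX.eigenvectorUnitary (fun i => 1 - hX.eigenvalues i) key h1
  rw [h2]
  exact sTup_antitone_comp hX.eigenvalues (fun r => 1 - r)
    (fun i j h => by show 1 - _ ≤ 1 - _; linarith) j

lemma sE_inv {n : ℕ} {X : Matrix (Fin n) (Fin n) ℂ} (hX : X.PosDef)
    (hi : (X⁻¹).IsHermitian) (j : Fin n) :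
    sE hi j = (sE hX.1 j.rev)⁻¹ := by
  have hev : ∀ i, 0 < hX.1.eigenvalues i := hX.eigenvalues_pos
  have key : X⁻¹
      = (hX.1.eigenvectorUnitary : Matrix (Fin n) (Fin n) ℂ)
        * Matrix.diagonal (fun i => (((hX.1.eigenvalues i)⁻¹ : ℝ) : ℂ))
        * star (hX.1.eigenvectorUnitary : Matrix (Fin n) (Fin n) ℂ) := by
    apply Matrix.inv_eq_right_inv
    nth_rewrite 1 [hX.1.spectral_theorem]
    have hmid : star (hX.1.eigenvectorUnitary : Matrix (Fin n) (Fin n) ℂ)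
        * (hX.1.eigenvectorUnitary : Matrix (Fin n) (Fin n) ℂ) = 1 :=
      Matrix.mem_unitaryGroup_iff'.1 hX.1.eigenvectorUnitary.2
    calc (hX.1.eigenvectorUnitary : Matrix (Fin n) (Fin n) ℂ)
          * Matrix.diagonal (RCLike.ofReal ∘ hX.1.eigenvalues)
          * star (hX.1.eigenvectorUnitary : Matrix (Fin n) (Fin n) ℂ)
          * ((hX.1.eigenvectorUnitary : Matrix (Fin n) (Fin n) ℂ)
            * Matrix.diagonal (fun i => (((hX.1.eigenvalues i)⁻¹ : ℝ) : ℂ))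
            * star (hX.1.eigenvectorUnitary : Matrix (Fin n) (Fin n) ℂ))
        = (hX.1.eigenvectorUnitary : Matrix (Fin n) (Fin n) ℂ)
          * (Matrix.diagonal (RCLike.ofReal ∘ hX.1.eigenvalues)
            * Matrix.diagonal (fun i => (((hX.1.eigenvalues i)⁻¹ : ℝ) : ℂ)))
          * star (hX.1.eigenvectorUnitary : Matrix (Fin n) (Fin n) ℂ) := by
          simp only [Matrix.mul_assoc]
          congr 2
          rw [← Matrix.mul_assoc, hmid, Matrix.one_mul]
      _ = 1 := by
          rw [Matrix.diagonal_mul_diagonal]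
          have : (fun i => (RCLike.ofReal ∘ hX.1.eigenvalues) i
              * (((hX.1.eigenvalues i)⁻¹ : ℝ) : ℂ)) = fun _ => (1 : ℂ) := by
            funext i
            have : (hX.1.eigenvalues i : ℝ) ≠ 0 := (hev i).ne'
            simp only [Function.comp_apply]
            rw [show (RCLike.ofReal (hX.1.eigenvalues i) : ℂ) = ((hX.1.eigenvalues i : ℝ) : ℂ)
              from rfl, ← Complex.ofReal_mul, mul_inv_cancel₀ this, Complex.ofReal_one]
          rw [this, Matrix.diagonal_one, Matrix.mul_one,
            Matrix.mem_unitaryGroup_iff.1 hX.1.eigenvectorUnitary.2]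
  have h2 := sE_eq_sTup hX.1.eigenvectorUnitary (fun i => (hX.1.eigenvalues i)⁻¹) key hi
  rw [h2]
  exact sTup_antitone_comp hX.1.eigenvalues (fun r => r⁻¹)
    (fun i j h => by
      have := hev i
      have := hev j
      exact inv_anti₀ (by linarith) h) j

lemma sE_mul_comm {n : ℕ} (A : Matrix (Fin n) (Fin n) ℂ)
    (h1 : (Aᴴ * A).IsHermitian) (h2 : (A * Aᴴ).IsHermitian) : sE h1 = sE h2 := by
  apply sTup_eq_of_prod_eq
  intro x hx
  rw [← charpoly_prod h1, ← charpoly_prod h2]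
  have e1 : x • (1 : Matrix (Fin n) (Fin n) ℂ) - Aᴴ * A
      = x • ((1 : Matrix (Fin n) (Fin n) ℂ) - Aᴴ * (x⁻¹ • A)) := by
    rw [smul_sub]
    congr 1
    rw [Matrix.mul_smul, smul_smul, mul_inv_cancel₀ hx, one_smul]
  have e2 : x • (1 : Matrix (Fin n) (Fin n) ℂ) - A * Aᴴ
      = x • ((1 : Matrix (Fin n) (Fin n) ℂ) - (x⁻¹ • A) * Aᴴ) := by
    rw [smul_sub]
    congr 1
    rw [Matrix.smul_mul, smul_smul, mul_inv_cancel₀ hx, one_smul]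
  rw [e1, e2, Matrix.det_smul, Matrix.det_smul, Matrix.det_one_sub_mul_comm]

lemma keyL {n k : ℕ} (hkn : k ≤ n) (P : Matrix (Fin n) (Fin n) ℂ) (hP : P.PosSemidef)
    (Q : Matrix (Fin n) (Fin k) ℂ) (hQ : Qᴴ * Q = 1) :
    ∃ r : ℝ, (Qᴴ * P * Q).det = (r : ℂ) ∧
      ∏ t : Fin k, sE hP.1 (Fin.castLE hkn t) ≤ r := by
  classical
  set U : Matrix (Fin n) (Fin n) ℂ := (hP.1.eigenvectorUnitary : Matrix (Fin n) (Fin n) ℂ)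
    with hU
  set ev := hP.1.eigenvalues with hev
  have hUU : U * Uᴴ = 1 := by
    rw [← Matrix.star_eq_conjTranspose]
    exact Matrix.mem_unitaryGroup_iff.1 hP.1.eigenvectorUnitary.2
  set X : Matrix (Fin n) (Fin k) ℂ := Uᴴ * Q with hXdef
  have hXX : Xᴴ * X = 1 := by
    rw [hXdef, conjTranspose_mul, conjTranspose_conjTranspose]
    rw [Matrix.mul_assoc, show U * (Uᴴ * Q) = Q by
      rw [← Matrix.mul_assoc, hUU, Matrix.one_mul], hQ]
  have hspec : Qᴴ * P * Q = Xᴴ * Matrix.diagonal (fun i => (ev i : ℂ)) * X := by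
    have hPs : P = U * Matrix.diagonal (fun i => (ev i : ℂ)) * Uᴴ := by
      rw [hU, ← Matrix.star_eq_conjTranspose]
      exact hP.1.spectral_theorem
    rw [hXdef, conjTranspose_mul, conjTranspose_conjTranspose]
    nth_rewrite 1 [hPs]
    simp only [Matrix.mul_assoc]
  refine ⟨∑ s : SubsetsCard n k,
    (∏ j, ev (semb s j)) * Complex.normSq ((X.submatrix (semb s) id).det), ?_, ?_⟩
  · rw [hspec, cb3]
    push_cast
    rfl
  · have hcb := cb3 X (fun _ => (1 : ℂ))
    rw [show Matrix.diagonal (fun _ : Fin n => (1 : ℂ)) = 1 from Matrix.diagonal_one,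
      Matrix.mul_one, hXX, det_one] at hcb
    simp only [Finset.prod_const_one, one_mul] at hcb
    have h1sum : ∑ s : SubsetsCard n k,
        Complex.normSq ((X.submatrix (semb s) id).det) = 1 := by
      exact_mod_cast hcb.symm
    set c := ∏ t : Fin k, sE hP.1 (Fin.castLE hkn t) with hc
    calc c = c * ∑ s : SubsetsCard n k,
          Complex.normSq ((X.submatrix (semb s) id).det) := by rw [h1sum, mul_one]
      _ ≤ ∑ s : SubsetsCard n k,
          (∏ j, ev (semb s j)) * Complex.normSq ((X.submatrix (semb s) id).det) := by
          rw [Finset.mul_sum]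
          apply Finset.sum_le_sum
          intro s _
          apply mul_le_mul_of_nonneg_right _ (Complex.normSq_nonneg _)
          exact minprod hkn ev (fun i => hP.eigenvalues_nonneg i) (semb s) (semb_inj s)

lemma posDef_conj_self {n k : ℕ} (W : Matrix (Fin n) (Fin k) ℂ)
    (hW : Function.Injective W.mulVec) : (Wᴴ * W).PosDef := by
  refine Matrix.PosDef.of_dotProduct_mulVec_pos (isHermitian_conjTranspose_mul_self W) fun x hx => ?_
  have h1 : W.mulVec x ≠ 0 := by
    intro h0
    apply hx
    apply hW
    rw [h0]
    simp [Matrix.mulVec_zero]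
  have h2 : star x ⬝ᵥ (Wᴴ * W) *ᵥ x = star (W *ᵥ x) ⬝ᵥ (W *ᵥ x) := by
    rw [← Matrix.mulVec_mulVec, Matrix.dotProduct_mulVec, ← Matrix.star_mulVec]
  rw [h2]
  exact Matrix.dotProduct_star_self_pos_iff.mpr h1

lemma conj_submatrix {n k : ℕ} (U Y : Matrix (Fin n) (Fin n) ℂ) (m : Fin k → Fin n) :
    (U.submatrix id m)ᴴ * Y * (U.submatrix id m) = (Uᴴ * Y * U).submatrix m m := by
  ext i j
  simp only [mul_apply, submatrix_apply, conjTranspose_apply, id_eq]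

lemma sE_nonneg {n : ℕ} {X : Matrix (Fin n) (Fin n) ℂ} (hX : X.PosSemidef) (j : Fin n) :
    0 ≤ sE hX.1 j := hX.eigenvalues_nonneg _

theorem prod_smallest_eig_H_ge (n k : ℕ) (hn : 0 < n) (hk : 0 < k) (hkn : k ≤ n)
    (A B : Matrix (Fin n) (Fin n) ℂ) (hA : (1 - Aᴴ * A).PosDef)
    (H : Matrix (Fin n) (Fin n) ℂ)
    (hH : H = (A - B)ᴴ * (1 - A * Aᴴ)⁻¹ * (A - B)) :
    ∏ t : Fin k, eigval H ((Fin.castLE hkn t).rev) ≥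
      ∏ t : Fin k, singval (A - B) ((Fin.castLE hkn t).rev) ^ 2 /
        (1 - eigval (Aᴴ * A) ((Fin.castLE hkn t).rev)) := by
  classical
  set C : Matrix (Fin n) (Fin n) ℂ := A - B with hC
  set M : Matrix (Fin n) (Fin n) ℂ := 1 - A * Aᴴ with hM
  -- M is positive definite
  have hNdet : IsUnit (1 - Aᴴ * A).det := hA.det_pos.ne'.isUnit
  have hKinv : (1 - Aᴴ * A) * (1 - Aᴴ * A)⁻¹ = 1 := Matrix.mul_nonsing_inv _ hNdet
  have hMP : M * (1 + A * (1 - Aᴴ * A)⁻¹ * Aᴴ) = 1 := by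
    have e1 : M * (1 + A * (1 - Aᴴ * A)⁻¹ * Aᴴ)
        = 1 - A * Aᴴ + (A * (1 - Aᴴ * A)) * (1 - Aᴴ * A)⁻¹ * Aᴴ := by
      rw [hM]; noncomm_ring
    rw [e1, Matrix.mul_assoc A, Matrix.mul_assoc A, hKinv, Matrix.one_mul]
    noncomm_ring
  have hPpd : (1 + A * (1 - Aᴴ * A)⁻¹ * Aᴴ).PosDef :=
    Matrix.PosDef.one.add_posSemidef (hA.inv.posSemidef.mul_mul_conjTranspose_same A)
  have hMpd : M.PosDef := by
    have := Matrix.inv_eq_left_inv hMP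
    rw [← this]
    exact hPpd.inv
  have hMinv : (M⁻¹).PosDef := hMpd.inv
  -- H and CᴴC are positive semidefinite
  have hCC : (Cᴴ * C).PosSemidef := posSemidef_conjTranspose_mul_self C
  have hHpsd : H.PosSemidef := by
    rw [hH]
    exact hMinv.posSemidef.conjTranspose_mul_mul_same (A - B)
  have hNpsd : (Aᴴ * A).PosSemidef := posSemidef_conjTranspose_mul_self A
  have hAAH : (A * Aᴴ).IsHermitian := isHermitian_mul_conjTranspose_self A
  -- rewrite the eigenvalue quantities
  have hdenom : ∀ j : Fin n, 1 - sE hNpsd.1 j = (sE hMinv.1 j)⁻¹ := by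
    intro j
    have e1 : sE hMinv.1 j = (sE hMpd.1 j.rev)⁻¹ := sE_inv hMpd hMinv.1 j
    have e2 : sE hMpd.1 j.rev = 1 - sE hAAH (j.rev).rev := by
      exact sE_one_sub hAAH hMpd.1 j.rev
    have e3 : sE hNpsd.1 = sE hAAH := sE_mul_comm A hNpsd.1 hAAH
    rw [e1, e2, Fin.rev_rev, inv_inv, e3]
  have hRHS : ∀ t : Fin k,
      singval (A - B) ((Fin.castLE hkn t).rev) ^ 2 /
          (1 - eigval (Aᴴ * A) ((Fin.castLE hkn t).rev))
        = sE hCC.1 (Fin.castLE hkn t) * sE hMinv.1 (Fin.castLE hkn t) := by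
    intro t
    have e1 : singval (A - B) ((Fin.castLE hkn t).rev) ^ 2
        = sE hCC.1 (Fin.castLE hkn t) := by
      rw [singval, eigval_rev_eq hCC.1]
      exact Real.sq_sqrt (sE_nonneg hCC _)
    rw [e1, eigval_rev_eq hNpsd.1, hdenom, div_inv_eq_mul]
  rw [ge_iff_le, Finset.prod_congr rfl (fun t _ => hRHS t),
    Finset.prod_congr rfl (fun t _ => eigval_rev_eq hHpsd.1 (Fin.castLE hkn t))]
  -- case split on invertibility of C
  by_cases hdet : IsUnit C.det
  · -- invertible case
    set mfun : Fin k → Fin n := fun t => Tuple.sort hHpsd.1.eigenvalues (Fin.castLE hkn t)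
      with hmfun
    have hminj : Function.Injective mfun :=
      fun i j h => Fin.castLE_injective hkn ((Tuple.sort hHpsd.1.eigenvalues).injective h)
    set U : Matrix (Fin n) (Fin n) ℂ :=
      (hHpsd.1.eigenvectorUnitary : Matrix (Fin n) (Fin n) ℂ) with hUdef
    set Q₀ : Matrix (Fin n) (Fin k) ℂ := U.submatrix id mfun with hQ0def
    have hUU' : Uᴴ * U = 1 := by
      rw [← Matrix.star_eq_conjTranspose]
      exact Matrix.mem_unitaryGroup_iff'.1 hHpsd.1.eigenvectorUnitary.2
    have hsub1 : ((1 : Matrix (Fin n) (Fin n) ℂ).submatrix mfun mfun)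
        = (1 : Matrix (Fin k) (Fin k) ℂ) := by
      ext i j
      by_cases h : i = j
      · subst h; simp
      · rw [Matrix.submatrix_apply, Matrix.one_apply_ne (fun hc => h (hminj hc)),
          Matrix.one_apply_ne h]
    have hQ0 : Q₀ᴴ * Q₀ = 1 := by
      have h := conj_submatrix U 1 mfun
      rw [Matrix.mul_one, Matrix.mul_one, hUU', hsub1] at h
      exact h
    have hQHQ : Q₀ᴴ * H * Q₀
        = Matrix.diagonal (fun t : Fin k => ((sE hHpsd.1 (Fin.castLE hkn t) : ℝ) : ℂ)) := by
      have h := conj_submatrix U H mfun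
      have hdiag : Uᴴ * H * U = Matrix.diagonal (RCLike.ofReal ∘ hHpsd.1.eigenvalues) := by
        rw [hUdef, ← Matrix.star_eq_conjTranspose]
        simpa using hHpsd.1.conjStarAlgAut_star_eigenvectorUnitary
      rw [hdiag] at h
      rw [hQ0def]
      rw [h]
      ext i j
      by_cases hij : i = j
      · subst hij
        rw [Matrix.submatrix_apply, Matrix.diagonal_apply_eq, Matrix.diagonal_apply_eq]
        rfl
      · rw [Matrix.submatrix_apply, Matrix.diagonal_apply_ne _ (fun hc => hij (hminj hc)),
          Matrix.diagonal_apply_ne _ hij]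
    set W : Matrix (Fin n) (Fin k) ℂ := C * Q₀ with hWdef
    set G : Matrix (Fin k) (Fin k) ℂ := Wᴴ * W with hGdef
    have hWinj : Function.Injective W.mulVec := by
      have hCinj : Function.Injective C.mulVec :=
        (Matrix.mulVec_injective_iff_isUnit).mpr ((Matrix.isUnit_iff_isUnit_det C).mpr hdet)
      have hQinj : Function.Injective Q₀.mulVec := by
        intro x y hxy
        have h1 : (Q₀ᴴ * Q₀) *ᵥ x = (Q₀ᴴ * Q₀) *ᵥ y := by
          rw [← Matrix.mulVec_mulVec, ← Matrix.mulVec_mulVec, hxy]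
        rwa [hQ0, Matrix.one_mulVec, Matrix.one_mulVec] at h1
      intro x y hxy
      apply hQinj
      apply hCinj
      rw [Matrix.mulVec_mulVec, Matrix.mulVec_mulVec]
      exact hxy
    have hGpd : G.PosDef := posDef_conj_self W hWinj
    set S : Matrix (Fin k) (Fin k) ℂ := (open scoped MatrixOrder in CFC.sqrt G) with hSdef
    have hS2 : S * S = G := by
      open scoped MatrixOrder in exact CFC.sqrt_mul_sqrt_self G hGpd.posSemidef.nonneg
    have hSh : Sᴴ = S := by
      open scoped MatrixOrder in exact (CFC.sqrt_nonneg G).posSemidef.1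
    have hdSS : S.det * S.det = G.det := by rw [← Matrix.det_mul, hS2]
    have hdetS : IsUnit S.det := by
      have : S.det ≠ 0 := by
        intro h0
        have := hGpd.det_pos.ne'
        rw [← hdSS, h0, mul_zero] at this
        exact this rfl
      exact this.isUnit
    set V : Matrix (Fin n) (Fin k) ℂ := W * S⁻¹ with hVdef
    have hVS : V * S = W := by
      rw [hVdef, Matrix.mul_assoc, Matrix.nonsing_inv_mul _ hdetS, Matrix.mul_one]
    have hVH : Vᴴ = S⁻¹ * Wᴴ := by
      rw [hVdef, Matrix.conjTranspose_mul, Matrix.conjTranspose_nonsing_inv, hSh]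
    have hVV : Vᴴ * V = 1 := by
      rw [hVH, hVdef]
      calc S⁻¹ * Wᴴ * (W * S⁻¹) = S⁻¹ * (Wᴴ * W) * S⁻¹ := by
            simp only [Matrix.mul_assoc]
        _ = S⁻¹ * (S * S) * S⁻¹ := by rw [← hGdef, ← hS2]
        _ = (S⁻¹ * S) * (S * S⁻¹) := by simp only [Matrix.mul_assoc]
        _ = 1 := by
            rw [Matrix.nonsing_inv_mul _ hdetS, Matrix.mul_nonsing_inv _ hdetS, Matrix.one_mul]
    have hGQ : Q₀ᴴ * (Cᴴ * C) * Q₀ = G := by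
      rw [hGdef, hWdef, Matrix.conjTranspose_mul]
      simp only [Matrix.mul_assoc]
    have hHWM : Q₀ᴴ * H * Q₀ = Wᴴ * M⁻¹ * W := by
      rw [hH, hWdef, Matrix.conjTranspose_mul]
      simp only [Matrix.mul_assoc]
    have hfact : Wᴴ * M⁻¹ * W = S * (Vᴴ * M⁻¹ * V) * S := by
      rw [← hVS, Matrix.conjTranspose_mul, hSh]
      simp only [Matrix.mul_assoc]
    obtain ⟨rG, hrGdet, hrGge⟩ := keyL hkn (Cᴴ * C) hCC Q₀ hQ0
    obtain ⟨rR, hrRdet, hrRge⟩ := keyL hkn M⁻¹ hMinv.posSemidef V hVV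
    have hdet2 : (Q₀ᴴ * H * Q₀).det = ((rG * rR : ℝ) : ℂ) := by
      rw [hHWM, hfact, Matrix.det_mul, Matrix.det_mul]
      have e1 : S.det * (Vᴴ * M⁻¹ * V).det * S.det
          = (S.det * S.det) * (Vᴴ * M⁻¹ * V).det := by ring
      rw [e1, hdSS, ← hGQ, hrGdet, hrRdet]
      push_cast
      ring
    have hdet1 : (Q₀ᴴ * H * Q₀).det
        = ((∏ t : Fin k, sE hHpsd.1 (Fin.castLE hkn t) : ℝ) : ℂ) := by
      rw [hQHQ, Matrix.det_diagonal]
      push_cast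
      rfl
    have hprodeq : ∏ t : Fin k, sE hHpsd.1 (Fin.castLE hkn t) = rG * rR := by
      have := hdet1.symm.trans hdet2
      exact_mod_cast this
    rw [Finset.prod_mul_distrib, hprodeq]
    exact mul_le_mul hrGge hrRge
      (Finset.prod_nonneg fun t _ => sE_nonneg hMinv.posSemidef _)
      (le_trans (Finset.prod_nonneg fun t _ => sE_nonneg hCC _) hrGge)
  · -- singular case
    have hdetC : C.det = 0 := by
      by_contra h
      exact hdet (isUnit_iff_ne_zero.mpr h)
    have hCC0 : ∃ i, hCC.1.eigenvalues i = 0 := by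
      have h1 : (Cᴴ * C).det = 0 := by
        rw [Matrix.det_mul, Matrix.det_conjTranspose, hdetC, mul_zero]
      have h2 := hCC.1.det_eq_prod_eigenvalues
      rw [h1] at h2
      obtain ⟨i, _, hi⟩ := Finset.prod_eq_zero_iff.1 h2.symm
      exact ⟨i, RCLike.ofReal_eq_zero.1 hi⟩
    obtain ⟨i, hi⟩ := hCC0
    set t0 : Fin k := ⟨0, hk⟩ with ht0
    have hzero : sE hCC.1 (Fin.castLE hkn t0) = 0 := by
      apply le_antisymm
      · have hval : sE hCC.1 ((Tuple.sort hCC.1.eigenvalues).symm i) = 0 := by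
          simp only [sE, sTup, Function.comp_apply, Equiv.apply_symm_apply]
          exact hi
        rw [← hval]
        apply sTup_mono
        exact Fin.mk_le_of_le_val (Nat.zero_le _)
      · exact sE_nonneg hCC _
    have hrhs0 : ∏ t : Fin k, sE hCC.1 (Fin.castLE hkn t) * sE hMinv.1 (Fin.castLE hkn t)
        = 0 := by
      apply Finset.prod_eq_zero (Finset.mem_univ t0)
      rw [hzero, zero_mul]
    rw [hrhs0]
    exact Finset.prod_nonneg fun t _ => sE_nonneg hHpsd _
end
end
end

section
/- Let A and B be arbitrary n×n complex matrices and let Q = (I − A*B)(I + B*B)^{−1}(I − A*B)*. Then for any indices 1 ≤ i_1 < i_2 < ... < i_k ≤ n, ∏_{t=1}^k λ_{i_t}(Q) ≥ ∏_{t=1}^k σ_{i_t}(I − A*B)^2 / (1 + λ_t(B*B)). -/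
open Matrix
open scoped ComplexOrder

namespace ProdEig
open Module
variable {n : ℕ}
/-- squared norm as a real number -/
noncomputable def nsq (x : Fin n → ℂ) : ℝ := (star x ⬝ᵥ x).re

/-- Rayleigh numerator -/
noncomputable def ray (A : Matrix (Fin n) (Fin n) ℂ) (x : Fin n → ℂ) : ℝ :=
  (star x ⬝ᵥ (A *ᵥ x)).re

lemma nsq_eq_sum (x : Fin n → ℂ) : nsq x = ∑ i, Complex.normSq (x i) := by
  unfold nsq
  rw [dotProduct, Complex.re_sum]
  congr 1; ext i
  simp [Pi.star_apply, mul_comm, Complex.mul_conj]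

lemma nsq_nonneg (x : Fin n → ℂ) : 0 ≤ nsq x := by
  rw [nsq_eq_sum]
  exact Finset.sum_nonneg fun i _ => Complex.normSq_nonneg _

lemma nsq_eq_zero_iff {x : Fin n → ℂ} : nsq x = 0 ↔ x = 0 := by
  rw [nsq_eq_sum]
  constructor
  · intro h
    funext i
    have h2 := (Finset.sum_eq_zero_iff_of_nonneg (fun i _ => Complex.normSq_nonneg (x i))).1 h i
      (Finset.mem_univ i)
    simpa using Complex.normSq_eq_zero.mp h2
  · intro h; subst h; simp

lemma nsq_pos_of_ne {x : Fin n → ℂ} (hx : x ≠ 0) : 0 < nsq x :=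
  lt_of_le_of_ne (nsq_nonneg x) (fun h => hx (nsq_eq_zero_iff.mp h.symm))

lemma dot_conjTranspose_mulVec (A : Matrix (Fin n) (Fin n) ℂ) (x z : Fin n → ℂ) :
    star x ⬝ᵥ (Aᴴ *ᵥ z) = star (A *ᵥ x) ⬝ᵥ z := by
  rw [star_mulVec, dotProduct_mulVec]

lemma ray_conj (A C : Matrix (Fin n) (Fin n) ℂ) (x : Fin n → ℂ) :
    ray (Cᴴ * A * C) x = ray A (C *ᵥ x) := by
  unfold ray
  rw [← mulVec_mulVec, ← mulVec_mulVec, dot_conjTranspose_mulVec]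

lemma nsq_mulVec_unitary {W : Matrix (Fin n) (Fin n) ℂ} (hW : Wᴴ * W = 1) (y : Fin n → ℂ) :
    nsq (W *ᵥ y) = nsq y := by
  unfold nsq
  rw [show star (W *ᵥ y) ⬝ᵥ (W *ᵥ y) = star y ⬝ᵥ ((Wᴴ * W) *ᵥ y) by
    rw [← mulVec_mulVec, dot_conjTranspose_mulVec]]
  rw [hW, one_mulVec]

lemma ray_add (A B : Matrix (Fin n) (Fin n) ℂ) (x : Fin n → ℂ) :
    ray (A + B) x = ray A x + ray B x := by
  unfold ray
  rw [add_mulVec, dotProduct_add, Complex.add_re]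

lemma ray_smul_one (s : ℝ) (x : Fin n → ℂ) : ray ((s : ℂ) • 1) x = s * nsq x := by
  unfold ray nsq
  rw [smul_mulVec, one_mulVec, dotProduct_smul]
  simp [Complex.re_ofReal_mul]

lemma ray_diagonal (f : Fin n → ℝ) (y : Fin n → ℂ) :
    ray (diagonal (fun j => (f j : ℂ))) y = ∑ j, f j * Complex.normSq (y j) := by
  unfold ray
  rw [dotProduct, Complex.re_sum]
  congr 1; ext j
  rw [mulVec_diagonal]
  simp only [Pi.star_apply]
  rw [show star (y j) * ((f j : ℂ) * y j)
      = (f j : ℂ) * ((y j) * star (y j)) by ring]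
  rw [Complex.star_def, Complex.mul_conj]
  simp [Complex.re_ofReal_mul]

/-- `ray` of a conjugated diagonal matrix. -/
lemma ray_unitary_diag {W : Matrix (Fin n) (Fin n) ℂ} (f : Fin n → ℝ) (x : Fin n → ℂ) :
    ray (W * diagonal (fun j => (f j : ℂ)) * Wᴴ) x
      = ∑ j, f j * Complex.normSq ((Wᴴ *ᵥ x) j) := by
  have h : W * diagonal (fun j => (f j : ℂ)) * Wᴴ
      = (Wᴴ)ᴴ * diagonal (fun j => (f j : ℂ)) * Wᴴ := by rw [conjTranspose_conjTranspose]
  rw [h, ray_conj, ray_diagonal]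

/-- Coordinate subspace supported on a finset. -/
noncomputable def Ksub (s : Finset (Fin n)) : Submodule ℂ (Fin n → ℂ) where
  carrier := {y | ∀ j, j ∉ s → y j = 0}
  add_mem' := by intro a b ha hb j hj; simp [ha j hj, hb j hj]
  zero_mem' := by intro j hj; rfl
  smul_mem' := by intro c a ha j hj; simp [ha j hj]

lemma mem_Ksub {s : Finset (Fin n)} {y : Fin n → ℂ} :
    y ∈ Ksub s ↔ ∀ j, j ∉ s → y j = 0 := Iff.rfl

noncomputable def KsubEquiv (s : Finset (Fin n)) : (Ksub s) ≃ₗ[ℂ] (s → ℂ) where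
  toFun y := fun j => (y : Fin n → ℂ) j
  map_add' := by intros; rfl
  map_smul' := by intros; rfl
  invFun z := ⟨fun j => if h : j ∈ s then z ⟨j, h⟩ else 0, by
    intro j hj; simp [hj]⟩
  left_inv := by
    rintro ⟨y, hy⟩
    ext j
    by_cases h : j ∈ s
    · simp [h]
    · simp [h, hy j h]
  right_inv := by
    rintro z
    ext j
    simp

lemma finrank_Ksub (s : Finset (Fin n)) : finrank ℂ (Ksub s) = s.card := by
  rw [LinearEquiv.finrank_eq (KsubEquiv s), finrank_fintype_fun_eq_card]
  simp

lemma finrank_le_n (V : Submodule ℂ (Fin n → ℂ)) : finrank ℂ V ≤ n := by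
  have := Submodule.finrank_le V
  rwa [finrank_fintype_fun_eq_card, Fintype.card_fin] at this

lemma exists_ne_zero_mem_inf {V W : Submodule ℂ (Fin n → ℂ)}
    (h : n < finrank ℂ V + finrank ℂ W) : ∃ x : Fin n → ℂ, x ≠ 0 ∧ x ∈ V ∧ x ∈ W := by
  have h1 : 0 < finrank ℂ ↥(V ⊓ W) := by
    have h2 := Submodule.finrank_sup_add_finrank_inf_eq V W
    have h3 := finrank_le_n (V ⊔ W)
    omega
  obtain ⟨⟨x, hx⟩, hx0⟩ := finrank_pos_iff_exists_ne_zero.mp h1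
  refine ⟨x, ?_, hx.1, hx.2⟩
  intro hxz
  exact hx0 (by simp [Submodule.mk_eq_zero, hxz])

lemma finrank_map_mulVecLin_eq {Y : Matrix (Fin n) (Fin n) ℂ} {S : Submodule ℂ (Fin n → ℂ)}
    (hinj : ∀ y ∈ S, Y *ᵥ y = 0 → y = 0) :
    finrank ℂ (S.map (Matrix.mulVecLin Y)) = finrank ℂ S := by
  rw [← LinearMap.range_domRestrict]
  have h := LinearMap.finrank_range_add_finrank_ker ((Matrix.mulVecLin Y).domRestrict S)
  have hker : LinearMap.ker ((Matrix.mulVecLin Y).domRestrict S) = ⊥ := by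
    rw [LinearMap.ker_eq_bot']
    rintro ⟨y, hy⟩ hm
    have : Y *ᵥ y = 0 := by
      simpa [LinearMap.domRestrict_apply, Matrix.mulVecLin_apply] using hm
    simp [Submodule.mk_eq_zero, hinj y hy this]
  rw [hker, finrank_bot, add_zero] at h
  exact h

lemma finrank_ker_ge (g : (Fin n → ℂ) →ₗ[ℂ] (Fin n → ℂ)) (s : Finset (Fin n))
    (hrange : LinearMap.range g ≤ Ksub s) :
    n - s.card ≤ finrank ℂ (LinearMap.ker g) := by
  have h := LinearMap.finrank_range_add_finrank_ker g
  have h2 : finrank ℂ (LinearMap.range g) ≤ s.card := by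
    calc finrank ℂ (LinearMap.range g) ≤ finrank ℂ (Ksub s) :=
          Submodule.finrank_mono hrange
    _ = s.card := finrank_Ksub s
  have h3 : finrank ℂ (Fin n → ℂ) = n := by
    rw [finrank_fintype_fun_eq_card, Fintype.card_fin]
  omega

lemma eigval_antitone {A : Matrix (Fin n) (Fin n) ℂ} (hA : A.IsHermitian) :
    Antitone (eigval A) := by
  intro j j' hj
  unfold eigval
  rw [dif_pos hA, dif_pos hA]
  have hmono := Tuple.monotone_sort hA.eigenvalues
  exact hmono (Fin.rev_le_rev.mpr hj)

lemma sortedSpec {A : Matrix (Fin n) (Fin n) ℂ} (hA : A.IsHermitian) :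
    ∃ W : Matrix (Fin n) (Fin n) ℂ, Wᴴ * W = 1 ∧ W * Wᴴ = 1 ∧
      A = W * diagonal (fun j => (eigval A j : ℂ)) * Wᴴ := by
  classical
  set U : Matrix (Fin n) (Fin n) ℂ := (hA.eigenvectorUnitary : Matrix (Fin n) (Fin n) ℂ)
  have hU1 : star U * U = 1 := (Matrix.mem_unitaryGroup_iff').mp hA.eigenvectorUnitary.2
  have hU2 : U * star U = 1 := (Matrix.mem_unitaryGroup_iff).mp hA.eigenvectorUnitary.2
  set e : Equiv.Perm (Fin n) := Fin.revPerm.trans (Tuple.sort hA.eigenvalues) with he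
  have heig : ∀ j, eigval A j = hA.eigenvalues (e j) := by
    intro j
    unfold eigval
    rw [dif_pos hA]
    rfl
  refine ⟨U.submatrix id ⇑e, ?_, ?_, ?_⟩
  · rw [conjTranspose_submatrix]
    rw [(Matrix.submatrix_mul Uᴴ U ⇑e id ⇑e Function.bijective_id).symm]
    rw [show Uᴴ = star U from rfl, hU1, submatrix_one_equiv]
  · rw [conjTranspose_submatrix]
    rw [Matrix.submatrix_mul_equiv U Uᴴ id e id]
    rw [show Uᴴ = star U from rfl, hU2, submatrix_id_id]
  · have hfun : (fun j => ((eigval A j : ℝ) : ℂ))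
        = (RCLike.ofReal ∘ hA.eigenvalues) ∘ ⇑e := funext fun j => by
      simp [heig j, Function.comp]
    have hdiag : diagonal (fun j => ((eigval A j : ℝ) : ℂ))
        = (diagonal (RCLike.ofReal ∘ hA.eigenvalues)).submatrix ⇑e ⇑e := by
      rw [submatrix_diagonal_equiv, hfun]
    rw [hdiag, conjTranspose_submatrix]
    rw [Matrix.submatrix_mul_equiv U (diagonal (RCLike.ofReal ∘ hA.eigenvalues)) id e ⇑e]
    rw [Matrix.submatrix_mul_equiv (U * diagonal (RCLike.ofReal ∘ hA.eigenvalues)) Uᴴ id e id]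
    rw [submatrix_id_id]
    exact hA.spectral_theorem

section CF

variable {A W : Matrix (Fin n) (Fin n) ℂ} {f : Fin n → ℝ}

/-- high subspace: image under `W` of coordinates `≤ j` -/
noncomputable def Vhigh (W : Matrix (Fin n) (Fin n) ℂ) (j : Fin n) : Submodule ℂ (Fin n → ℂ) :=
  (Ksub (Finset.Iic j)).map (Matrix.mulVecLin W)

noncomputable def Vlow (W : Matrix (Fin n) (Fin n) ℂ) (j : Fin n) : Submodule ℂ (Fin n → ℂ) :=
  (Ksub (Finset.Ici j)).map (Matrix.mulVecLin W)

lemma mulVec_injective_of_unitary (hW1 : Wᴴ * W = 1) {y : Fin n → ℂ} (hy : W *ᵥ y = 0) :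
    y = 0 := by
  have : Wᴴ *ᵥ (W *ᵥ y) = y := by rw [mulVec_mulVec, hW1, one_mulVec]
  rw [hy, mulVec_zero] at this
  exact this.symm

lemma finrank_Vhigh (hW1 : Wᴴ * W = 1) (j : Fin n) :
    finrank ℂ (Vhigh W j) = (j : ℕ) + 1 := by
  unfold Vhigh
  rw [finrank_map_mulVecLin_eq (fun y _ hy => mulVec_injective_of_unitary hW1 hy),
    finrank_Ksub, Fin.card_Iic]

lemma finrank_Vlow (hW1 : Wᴴ * W = 1) (j : Fin n) :
    finrank ℂ (Vlow W j) = n - (j : ℕ) := by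
  unfold Vlow
  rw [finrank_map_mulVecLin_eq (fun y _ hy => mulVec_injective_of_unitary hW1 hy),
    finrank_Ksub, Fin.card_Ici]

lemma ray_decomp (hW1 : Wᴴ * W = 1)
    (hd : A = W * diagonal (fun l => (f l : ℂ)) * Wᴴ) {y : Fin n → ℂ} :
    ray A (W *ᵥ y) = ∑ l, f l * Complex.normSq (y l) := by
  rw [hd, ray_unitary_diag]
  congr 1
  funext l
  rw [mulVec_mulVec, hW1, one_mulVec]

/-- On `Vlow W j`, the Rayleigh quotient is at most `f j`. -/
lemma ray_le_on_Vlow (hW1 : Wᴴ * W = 1) (hf : Antitone f)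
    (hd : A = W * diagonal (fun l => (f l : ℂ)) * Wᴴ) (j : Fin n)
    {x : Fin n → ℂ} (hx : x ∈ Vlow W j) : ray A x ≤ f j * nsq x := by
  obtain ⟨y, hy, rfl⟩ := hx
  rw [show Matrix.mulVecLin W y = W *ᵥ y from rfl] at *
  rw [ray_decomp hW1 hd, nsq_mulVec_unitary hW1, nsq_eq_sum, Finset.mul_sum]
  apply Finset.sum_le_sum
  intro l _
  by_cases hl : l ∈ Finset.Ici j
  · exact mul_le_mul_of_nonneg_right (hf (Finset.mem_Ici.mp hl)) (Complex.normSq_nonneg _)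
  · rw [hy l hl]; simp

/-- On `Vhigh W j`, the Rayleigh quotient is at least `f j`. -/
lemma ray_ge_on_Vhigh (hW1 : Wᴴ * W = 1) (hf : Antitone f)
    (hd : A = W * diagonal (fun l => (f l : ℂ)) * Wᴴ) (j : Fin n)
    {x : Fin n → ℂ} (hx : x ∈ Vhigh W j) : f j * nsq x ≤ ray A x := by
  obtain ⟨y, hy, rfl⟩ := hx
  rw [show Matrix.mulVecLin W y = W *ᵥ y from rfl] at *
  rw [ray_decomp hW1 hd, nsq_mulVec_unitary hW1, nsq_eq_sum, Finset.mul_sum]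
  apply Finset.sum_le_sum
  intro l _
  by_cases hl : l ∈ Finset.Iic j
  · exact mul_le_mul_of_nonneg_right (hf (Finset.mem_Iic.mp hl)) (Complex.normSq_nonneg _)
  · rw [hy l hl]; simp

/-- abstract min-max lower bound against a sorted decomposition -/
lemma le_f_of_subspace (hW1 : Wᴴ * W = 1) (hf : Antitone f)
    (hd : A = W * diagonal (fun l => (f l : ℂ)) * Wᴴ) (j : Fin n)
    (V : Submodule ℂ (Fin n → ℂ)) (hV : (j : ℕ) + 1 ≤ finrank ℂ V) (b : ℝ)
    (hb : ∀ x ∈ V, b * nsq x ≤ ray A x) : b ≤ f j := by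
  obtain ⟨x, hx0, hxV, hxW⟩ := exists_ne_zero_mem_inf (V := V) (W := Vlow W j) (by
    rw [finrank_Vlow hW1]
    have := j.isLt
    omega)
  have h1 := hb x hxV
  have h2 := ray_le_on_Vlow hW1 hf hd j hxW
  have h3 := nsq_pos_of_ne hx0
  nlinarith
/-- abstract min-max upper bound against a sorted decomposition -/
lemma f_le_of_subspace (hW1 : Wᴴ * W = 1) (hf : Antitone f)
    (hd : A = W * diagonal (fun l => (f l : ℂ)) * Wᴴ) (j : Fin n)
    (V : Submodule ℂ (Fin n → ℂ)) (hV : n - (j : ℕ) ≤ finrank ℂ V) (b : ℝ)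
    (hb : ∀ x ∈ V, ray A x ≤ b * nsq x) : f j ≤ b := by
  obtain ⟨x, hx0, hxV, hxW⟩ := exists_ne_zero_mem_inf (V := V) (W := Vhigh W j) (by
    rw [finrank_Vhigh hW1]
    have := j.isLt
    omega)
  have h1 := hb x hxV
  have h2 := ray_ge_on_Vhigh hW1 hf hd j hxW
  have h3 := nsq_pos_of_ne hx0
  nlinarith

end CF

section EigLemmas
variable {A B H Y C W : Matrix (Fin n) (Fin n) ℂ} {f : Fin n → ℝ}

lemma isHermitian_decomp (hW : True) (f : Fin n → ℝ) (W : Matrix (Fin n) (Fin n) ℂ) :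
    (W * diagonal (fun l => (f l : ℂ)) * Wᴴ).IsHermitian := by
  have hdiag : (diagonal (fun l => (f l : ℂ)))ᴴ = diagonal (fun l => (f l : ℂ)) := by
    rw [diagonal_conjTranspose,
      show (star fun l => ((f l) : ℂ)) = (fun l => ((f l) : ℂ)) from
        funext fun l => by simp [Pi.star_apply, Complex.star_def, Complex.conj_ofReal]]
  unfold Matrix.IsHermitian
  rw [conjTranspose_mul, conjTranspose_mul, conjTranspose_conjTranspose, hdiag, mul_assoc]

lemma cf_le_eigval (hA : A.IsHermitian) (j : Fin n) (V : Submodule ℂ (Fin n → ℂ))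
    (hV : (j : ℕ) + 1 ≤ finrank ℂ V) (b : ℝ) (hb : ∀ x ∈ V, b * nsq x ≤ ray A x) :
    b ≤ eigval A j := by
  obtain ⟨W, hW1, hW2, hd⟩ := sortedSpec hA
  exact le_f_of_subspace hW1 (eigval_antitone hA) hd j V hV b hb

lemma eigval_le_cf (hA : A.IsHermitian) (j : Fin n) (V : Submodule ℂ (Fin n → ℂ))
    (hV : n - (j : ℕ) ≤ finrank ℂ V) (b : ℝ) (hb : ∀ x ∈ V, ray A x ≤ b * nsq x) :
    eigval A j ≤ b := by
  obtain ⟨W, hW1, hW2, hd⟩ := sortedSpec hA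
  exact f_le_of_subspace hW1 (eigval_antitone hA) hd j V hV b hb

/-- uniqueness of sorted diagonalization -/
lemma eigval_unique (hW1 : Wᴴ * W = 1) (hW2 : W * Wᴴ = 1) (hf : Antitone f)
    (hd : A = W * diagonal (fun l => (f l : ℂ)) * Wᴴ) (j : Fin n) :
    eigval A j = f j := by
  have hA : A.IsHermitian := hd ▸ isHermitian_decomp trivial f W
  apply le_antisymm
  · exact eigval_le_cf hA j (Vlow W j) (le_of_eq (finrank_Vlow hW1 j).symm) (f j)
      (fun x hx => ray_le_on_Vlow hW1 hf hd j hx)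
  · exact cf_le_eigval hA j (Vhigh W j) (le_of_eq (finrank_Vhigh hW1 j).symm) (f j)
      (fun x hx => ray_ge_on_Vhigh hW1 hf hd j hx)

lemma eigval_nonneg (hA : A.IsHermitian) (hpsd : ∀ x, 0 ≤ ray A x) (j : Fin n) :
    0 ≤ eigval A j := by
  obtain ⟨W, hW1, hW2, hd⟩ := sortedSpec hA
  have h := hpsd (W *ᵥ Pi.single j 1)
  rw [ray_decomp hW1 hd] at h
  have hsum : ∑ l, eigval A l * Complex.normSq ((Pi.single j 1 : Fin n → ℂ) l) = eigval A j := by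
    rw [Finset.sum_eq_single_of_mem j (Finset.mem_univ j)
      (fun l _ hl => by simp [Pi.single_eq_of_ne hl])]
    simp
  linarith

lemma eigval_pos (hA : A.IsHermitian) (hpd : ∀ x, x ≠ 0 → 0 < ray A x) (j : Fin n) :
    0 < eigval A j := by
  obtain ⟨W, hW1, hW2, hd⟩ := sortedSpec hA
  have hx0 : (W *ᵥ Pi.single j 1 : Fin n → ℂ) ≠ 0 := by
    intro h
    have h1 : nsq (W *ᵥ Pi.single j 1) = 0 := by rw [h]; exact nsq_eq_zero_iff.mpr rfl
    rw [nsq_mulVec_unitary hW1, nsq_eq_sum] at h1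
    rw [Finset.sum_eq_single j] at h1
    · simp at h1
    · intro l _ hl
      simp [Pi.single_eq_of_ne hl]
    · simp
  have h := hpd _ hx0
  rw [ray_decomp hW1 hd] at h
  have hsum : ∑ l, eigval A l * Complex.normSq ((Pi.single j 1 : Fin n → ℂ) l) = eigval A j := by
    rw [Finset.sum_eq_single_of_mem j (Finset.mem_univ j)
      (fun l _ hl => by simp [Pi.single_eq_of_ne hl])]
    simp
  linarith

lemma eigval_mono (hA : A.IsHermitian) (hB : B.IsHermitian)
    (hle : ∀ x, ray A x ≤ ray B x) (j : Fin n) : eigval A j ≤ eigval B j := by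
  obtain ⟨W, hW1, hW2, hd⟩ := sortedSpec hA
  exact cf_le_eigval hB j (Vhigh W j) (le_of_eq (finrank_Vhigh hW1 j).symm) (eigval A j)
    (fun x hx => le_trans (ray_ge_on_Vhigh hW1 (eigval_antitone hA) hd j hx) (hle x))

lemma eigval_add_smul_one (hA : A.IsHermitian) (s : ℝ) (j : Fin n) :
    eigval (A + (s : ℂ) • 1) j = eigval A j + s := by
  obtain ⟨W, hW1, hW2, hd⟩ := sortedSpec hA
  have hdec : A + (s : ℂ) • 1
      = W * diagonal (fun l => ((eigval A l + s : ℝ) : ℂ)) * Wᴴ := by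
    have h1 : diagonal (fun l => ((eigval A l + s : ℝ) : ℂ))
        = diagonal (fun l => (eigval A l : ℂ)) + (s : ℂ) • 1 := by
      ext a b
      by_cases hab : a = b
      · subst hab
        simp only [diagonal_apply_eq, Matrix.add_apply, Matrix.smul_apply, Matrix.one_apply_eq,
          smul_eq_mul, mul_one]
        push_cast
        ring
      · simp [Matrix.diagonal_apply_ne _ hab, Matrix.one_apply_ne hab]
    rw [h1, mul_add, add_mul, ← hd]
    congr 1
    rw [Matrix.mul_smul, mul_one, Matrix.smul_mul, hW2]
  exact eigval_unique hW1 hW2 (fun a b hab => by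
    simpa using add_le_add_right (eigval_antitone hA hab) s) hdec j

lemma eigval_conj_unitary (hA : A.IsHermitian) {U : Matrix (Fin n) (Fin n) ℂ}
    (hU1 : Uᴴ * U = 1) (hU2 : U * Uᴴ = 1) (j : Fin n) :
    eigval (Uᴴ * A * U) j = eigval A j := by
  obtain ⟨W, hW1, hW2, hd⟩ := sortedSpec hA
  have hdec : Uᴴ * A * U = (Uᴴ * W) * diagonal (fun l => (eigval A l : ℂ)) * (Uᴴ * W)ᴴ := by
    rw [conjTranspose_mul, conjTranspose_conjTranspose]
    conv_lhs => rw [hd]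
    simp only [Matrix.mul_assoc]
  have h1 : (Uᴴ * W)ᴴ * (Uᴴ * W) = 1 := by
    rw [conjTranspose_mul, conjTranspose_conjTranspose, Matrix.mul_assoc,
      ← Matrix.mul_assoc U Uᴴ W, hU2, one_mul, hW1]
  have h2 : (Uᴴ * W) * (Uᴴ * W)ᴴ = 1 := by
    rw [conjTranspose_mul, conjTranspose_conjTranspose, Matrix.mul_assoc,
      ← Matrix.mul_assoc W Wᴴ U, hW2, one_mul, hU1]
  exact eigval_unique h1 h2 (eigval_antitone hA) hdec j

lemma det_eq_prod_eigval (hA : A.IsHermitian) :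
    A.det = (∏ j, (eigval A j : ℂ)) := by
  obtain ⟨W, hW1, hW2, hd⟩ := sortedSpec hA
  conv_lhs => rw [hd]
  rw [det_mul, det_mul, mul_comm, ← mul_assoc, mul_comm (Wᴴ.det), ← det_mul, hW2,
    det_one, one_mul, det_diagonal]

lemma ray_conjT_mul (Y : Matrix (Fin n) (Fin n) ℂ) (x : Fin n → ℂ) :
    ray (Yᴴ * Y) x = nsq (Y *ᵥ x) := by
  unfold ray nsq
  rw [← mulVec_mulVec, dot_conjTranspose_mulVec]

lemma ray_mul_conjT (Y : Matrix (Fin n) (Fin n) ℂ) (x : Fin n → ℂ) :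
    ray (Y * Yᴴ) x = nsq (Yᴴ *ᵥ x) := by
  rw [show Y * Yᴴ = (Yᴴ)ᴴ * Yᴴ by rw [conjTranspose_conjTranspose], ray_conjT_mul]

lemma isHermitian_conj_mul (hH : H.IsHermitian) (C : Matrix (Fin n) (Fin n) ℂ) :
    (Cᴴ * H * C).IsHermitian := by
  unfold Matrix.IsHermitian
  rw [conjTranspose_mul, conjTranspose_mul, conjTranspose_conjTranspose, hH.eq,
    Matrix.mul_assoc]

/-- Contraction inequality : `eigval (Cᴴ H C) ≤ c² eigval H` for psd `H` and `‖C‖ ≤ c`. -/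
lemma eigval_contract (hH : H.IsHermitian) (hpsd : ∀ x, 0 ≤ ray H x)
    (C : Matrix (Fin n) (Fin n) ℂ) (c : ℝ)
    (hC : ∀ x, nsq (C *ᵥ x) ≤ c^2 * nsq x) (j : Fin n) :
    eigval (Cᴴ * H * C) j ≤ c^2 * eigval H j := by
  obtain ⟨W, hW1, hW2, hd⟩ := sortedSpec hH
  have hWu : (Wᴴ)ᴴ * Wᴴ = 1 := by rw [conjTranspose_conjTranspose, hW2]
  set Tj : Matrix (Fin (j : ℕ)) (Fin n) ℂ :=
    (Wᴴ * C).submatrix (fun a => (Fin.castLE j.isLt.le a)) id with hTj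
  set V := LinearMap.ker (Matrix.mulVecLin Tj) with hV
  have hfr : n - (j : ℕ) ≤ finrank ℂ V := by
    have h := LinearMap.finrank_range_add_finrank_ker (Matrix.mulVecLin Tj)
    have h2 : finrank ℂ (LinearMap.range (Matrix.mulVecLin Tj)) ≤ (j : ℕ) := by
      calc finrank ℂ (LinearMap.range (Matrix.mulVecLin Tj))
          ≤ finrank ℂ (Fin (j : ℕ) → ℂ) := Submodule.finrank_le _
      _ = (j : ℕ) := by rw [finrank_fintype_fun_eq_card, Fintype.card_fin]
    have h3 : finrank ℂ (Fin n → ℂ) = n := by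
      rw [finrank_fintype_fun_eq_card, Fintype.card_fin]
    rw [hV]
    omega
  apply eigval_le_cf (isHermitian_conj_mul hH C) j V hfr
  intro x hx
  have hker : Tj *ᵥ x = 0 := LinearMap.mem_ker.mp hx
  have hy0 : ∀ l : Fin n, (l : ℕ) < (j : ℕ) → (Wᴴ *ᵥ (C *ᵥ x)) l = 0 := by
    intro l hl
    have h1 : (Tj *ᵥ x) ⟨(l : ℕ), hl⟩ = 0 := by rw [hker]; rfl
    have h2 : (Tj *ᵥ x) ⟨(l : ℕ), hl⟩ = ((Wᴴ * C) *ᵥ x) l := by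
      have : Fin.castLE j.isLt.le ⟨(l : ℕ), hl⟩ = l := by
        apply Fin.ext; rfl
      rw [hTj]
      show ((Wᴴ * C) *ᵥ x) (Fin.castLE j.isLt.le ⟨(l : ℕ), hl⟩) = _
      rw [this]
    rw [mulVec_mulVec]
    rw [h2] at h1
    exact h1
  have hray : ray (Cᴴ * H * C) x = ∑ l, eigval H l * Complex.normSq ((Wᴴ *ᵥ (C *ᵥ x)) l) := by
    rw [ray_conj]
    conv_lhs => rw [hd]
    rw [ray_unitary_diag]
  have hfj : 0 ≤ eigval H j := eigval_nonneg hH hpsd j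
  have hbound : ray (Cᴴ * H * C) x ≤ eigval H j * nsq (Wᴴ *ᵥ (C *ᵥ x)) := by
    rw [hray, nsq_eq_sum, Finset.mul_sum]
    apply Finset.sum_le_sum
    intro l _
    by_cases hl : (l : ℕ) < (j : ℕ)
    · rw [hy0 l hl]; simp
    · exact mul_le_mul_of_nonneg_right
        (eigval_antitone hH (by omega : j ≤ l)) (Complex.normSq_nonneg _)
  have hnsq : nsq (Wᴴ *ᵥ (C *ᵥ x)) = nsq (C *ᵥ x) := nsq_mulVec_unitary hWu _
  calc ray (Cᴴ * H * C) x ≤ eigval H j * nsq (C *ᵥ x) := by rw [← hnsq]; exact hbound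
  _ ≤ eigval H j * (c^2 * nsq x) := mul_le_mul_of_nonneg_left (hC x) hfj
  _ = c^2 * eigval H j * nsq x := by ring

lemma nsq_diag_mulVec (f : Fin n → ℝ) (y : Fin n → ℂ) :
    nsq ((diagonal fun l => (f l : ℂ)) *ᵥ y) = ∑ l, (f l)^2 * Complex.normSq (y l) := by
  rw [nsq_eq_sum]
  congr 1
  funext l
  rw [mulVec_diagonal, Complex.normSq_mul, Complex.normSq_ofReal]
  ring

lemma eigval_conjT_mul_le (Y : Matrix (Fin n) (Fin n) ℂ) (j : Fin n) :
    eigval (Yᴴ * Y) j ≤ eigval (Y * Yᴴ) j := by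
  have hG : (Yᴴ * Y).IsHermitian := isHermitian_conjTranspose_mul_self Y
  have hG2 : (Y * Yᴴ).IsHermitian := isHermitian_mul_conjTranspose_self Y
  set f : Fin n → ℝ := eigval (Yᴴ * Y) with hf
  by_cases hfj : f j ≤ 0
  · exact le_trans hfj (eigval_nonneg hG2 (fun x => by rw [ray_mul_conjT]; exact nsq_nonneg _) j)
  push_neg at hfj
  obtain ⟨W, hW1, hW2, hd⟩ := sortedSpec hG
  set S := Ksub (Finset.Iic j) with hS
  have hinj : ∀ y ∈ S, (Y * W) *ᵥ y = 0 → y = 0 := by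
    intro y hy h0
    have h1 : ray (Yᴴ * Y) (W *ᵥ y) = 0 := by
      rw [ray_conjT_mul, mulVec_mulVec, h0]
      exact nsq_eq_zero_iff.mpr rfl
    rw [ray_decomp hW1 hd] at h1
    have h2 : f j * nsq y ≤ ∑ l, f l * Complex.normSq (y l) := by
      rw [nsq_eq_sum, Finset.mul_sum]
      apply Finset.sum_le_sum
      intro l _
      by_cases hl : l ∈ Finset.Iic j
      · exact mul_le_mul_of_nonneg_right (eigval_antitone hG (Finset.mem_Iic.mp hl))
          (Complex.normSq_nonneg _)
      · rw [hy l hl]; simp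
    rw [h1] at h2
    have h3 := nsq_nonneg y
    have h4 : nsq y = 0 := by nlinarith
    exact nsq_eq_zero_iff.mp h4
  have hfr : finrank ℂ (S.map (Matrix.mulVecLin (Y * W))) = (j : ℕ) + 1 := by
    rw [finrank_map_mulVecLin_eq hinj, hS, finrank_Ksub, Fin.card_Iic]
  apply cf_le_eigval hG2 j _ (le_of_eq hfr.symm)
  rintro x ⟨y, hy, rfl⟩
  show f j * nsq ((Y * W) *ᵥ y) ≤ ray (Y * Yᴴ) ((Y * W) *ᵥ y)
  have hray : ray (Y * Yᴴ) ((Y * W) *ᵥ y) = ∑ l, (f l)^2 * Complex.normSq (y l) := by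
    rw [ray_mul_conjT, mulVec_mulVec, ← Matrix.mul_assoc]
    have hGW : Yᴴ * Y * W = W * diagonal (fun l => (f l : ℂ)) := by
      conv_lhs => rw [hd]
      rw [Matrix.mul_assoc, hW1, mul_one]
    rw [hGW, ← mulVec_mulVec, nsq_mulVec_unitary hW1, nsq_diag_mulVec]
  have hns : nsq ((Y * W) *ᵥ y) = ∑ l, f l * Complex.normSq (y l) := by
    rw [← mulVec_mulVec, ← ray_conjT_mul, ray_decomp hW1 hd]
  rw [hray, hns, Finset.mul_sum]
  apply Finset.sum_le_sum
  intro l _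
  by_cases hl : l ∈ Finset.Iic j
  · have h5 : f j ≤ f l := eigval_antitone hG (Finset.mem_Iic.mp hl)
    have h6 := Complex.normSq_nonneg (y l)
    have h7 : 0 < f l := lt_of_lt_of_le hfj h5
    nlinarith [mul_nonneg (mul_nonneg h6 h7.le) (sub_nonneg.mpr h5)]
  · rw [hy l hl]; simp

lemma eigval_conjT_mul (Y : Matrix (Fin n) (Fin n) ℂ) :
    eigval (Yᴴ * Y) = eigval (Y * Yᴴ) := by
  funext j
  refine le_antisymm (eigval_conjT_mul_le Y j) ?_
  have := eigval_conjT_mul_le Yᴴ j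
  rwa [conjTranspose_conjTranspose] at this

lemma diag_real_conjT (g : Fin n → ℝ) :
    (diagonal (fun l => (g l : ℂ)))ᴴ = diagonal (fun l => (g l : ℂ)) := by
  rw [diagonal_conjTranspose,
    show (star fun l => ((g l) : ℂ)) = (fun l => ((g l) : ℂ)) from
      funext fun l => by simp [Pi.star_apply, Complex.star_def, Complex.conj_ofReal]]

lemma nsq_diag_le {g : Fin n → ℝ} {c : ℝ} (hg : ∀ j, |g j| ≤ c) (x : Fin n → ℂ) :
    nsq ((diagonal fun l => (g l : ℂ)) *ᵥ x) ≤ c^2 * nsq x := by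
  rw [nsq_diag_mulVec, nsq_eq_sum, Finset.mul_sum]
  apply Finset.sum_le_sum
  intro l _
  have h1 := abs_le.mp (hg l)
  exact mul_le_mul_of_nonneg_right (sq_le_sq' h1.1 h1.2) (Complex.normSq_nonneg _)

lemma ray_diag_conj (g : Fin n → ℝ) (H : Matrix (Fin n) (Fin n) ℂ) (x : Fin n → ℂ) :
    ray ((diagonal fun l => (g l : ℂ)) * H * (diagonal fun l => (g l : ℂ))) x
      = ray H ((diagonal fun l => (g l : ℂ)) *ᵥ x) := by
  conv_lhs => rw [show (diagonal fun l => (g l : ℂ)) * H * (diagonal fun l => (g l : ℂ))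
    = (diagonal fun l => (g l : ℂ))ᴴ * H * (diagonal fun l => (g l : ℂ)) by
      rw [diag_real_conjT]]
  rw [ray_conj]

lemma isHermitian_diag_conj (g : Fin n → ℝ) {H : Matrix (Fin n) (Fin n) ℂ}
    (hH : H.IsHermitian) :
    ((diagonal fun l => (g l : ℂ)) * H * (diagonal fun l => (g l : ℂ))).IsHermitian := by
  rw [show (diagonal fun l => (g l : ℂ)) * H * (diagonal fun l => (g l : ℂ))
    = (diagonal fun l => (g l : ℂ))ᴴ * H * (diagonal fun l => (g l : ℂ)) by
      rw [diag_real_conjT]]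
  exact isHermitian_conj_mul hH _

/-- conjugation of a psd matrix by a real diagonal matrix bounded by `c`. -/
lemma eigval_diag_conj_le {H : Matrix (Fin n) (Fin n) ℂ} (hH : H.IsHermitian)
    (hpsd : ∀ x, 0 ≤ ray H x) (g : Fin n → ℝ) (c : ℝ) (hg : ∀ j, |g j| ≤ c) (j : Fin n) :
    eigval ((diagonal fun l => (g l : ℂ)) * H * (diagonal fun l => (g l : ℂ))) j
      ≤ c^2 * eigval H j := by
  rw [show (diagonal fun l => (g l : ℂ)) * H * (diagonal fun l => (g l : ℂ))
    = (diagonal fun l => (g l : ℂ))ᴴ * H * (diagonal fun l => (g l : ℂ)) by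
      rw [diag_real_conjT]]
  exact eigval_contract hH hpsd _ c (fun x => nsq_diag_le hg x) j

end EigLemmas

section Core

/-- The key diagonal-case inequality. -/
theorem core (k : ℕ) (hk : 0 < k) (hkn : k ≤ n) (Y : Matrix (Fin n) (Fin n) ℂ)
    (p : Fin n → ℝ) (hp : ∀ j, 0 < p j) (hpa : Antitone p)
    (i : Fin k → Fin n) (hi : StrictMono i) :
    (∏ t, eigval (Yᴴ * Y) (i t)) * (∏ t : Fin k, p (Fin.rev (Fin.castLE hkn t)))
      ≤ ∏ t, eigval (Y * diagonal (fun j => (p j : ℂ)) * Yᴴ) (i t) := by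
  classical
  have hn : 0 < n := lt_of_lt_of_le hk hkn
  set G := Yᴴ * Y with hGdef
  have hG : G.IsHermitian := isHermitian_conjTranspose_mul_self Y
  have hGpsd : ∀ x, 0 ≤ ray G x := fun x => by
    rw [hGdef, ray_conjT_mul]; exact nsq_nonneg _
  set r : Fin n → ℝ := fun j => Real.sqrt (p j) with hrdef
  have hrpos : ∀ j, 0 < r j := fun j => Real.sqrt_pos.mpr (hp j)
  set jc : Fin n := ⟨n - k, by omega⟩ with hjc
  set c : ℝ := r jc with hcdef
  have hc : 0 < c := hrpos jc
  set q : Fin n → ℝ := fun j => min c (r j) with hqdef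
  have hq0 : ∀ j, 0 < q j := fun j => lt_min hc (hrpos j)
  have hqc : ∀ j, |q j| ≤ c := fun j => by
    rw [abs_of_pos (hq0 j)]; exact min_le_left _ _
  have hqr : ∀ j, q j ≤ r j := fun j => min_le_right _ _
  set R := diagonal (fun j => (r j : ℂ)) with hRdef
  set Rm := diagonal (fun j => (q j : ℂ)) with hRmdef
  -- Step A : identify the eigenvalues of Y diag(p) Yᴴ with those of R G R
  have hRR : R * R = diagonal (fun j => (p j : ℂ)) := by
    rw [hRdef, diagonal_mul_diagonal,
      show (fun j => ((r j : ℂ)) * ((r j : ℂ))) = (fun j => ((p j) : ℂ)) from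
        funext fun j => by rw [← Complex.ofReal_mul, Real.mul_self_sqrt (hp j).le]]
  have hYd : Y * diagonal (fun j => (p j : ℂ)) * Yᴴ = (Y * R) * (Y * R)ᴴ := by
    rw [conjTranspose_mul, hRdef, diag_real_conjT, ← hRdef,
      show Y * R * (R * Yᴴ) = Y * (R * R) * Yᴴ by simp only [Matrix.mul_assoc], hRR]
  have hA1 : eigval (Y * diagonal (fun j => (p j : ℂ)) * Yᴴ) = eigval (R * G * R) := by
    have hM : (Y * R)ᴴ * (Y * R) = R * G * R := by
      rw [conjTranspose_mul, hRdef, diag_real_conjT, ← hRdef, hGdef]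
      simp only [Matrix.mul_assoc]
    rw [hYd, ← eigval_conjT_mul, hM]
  -- basic facts about R G R and Rm G Rm
  have hRGRh : (R * G * R).IsHermitian := by
    rw [hRdef]; exact isHermitian_diag_conj r hG
  have hRGRpsd : ∀ x, 0 ≤ ray (R * G * R) x := fun x => by
    rw [hRdef, ray_diag_conj]; exact hGpsd _
  have hRmGRmh : (Rm * G * Rm).IsHermitian := by
    rw [hRmdef]; exact isHermitian_diag_conj q hG
  have hRmGRmpsd : ∀ x, 0 ≤ ray (Rm * G * Rm) x := fun x => by
    rw [hRmdef, ray_diag_conj]; exact hGpsd _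
  -- Step B : termwise comparison
  have hB : ∀ j, eigval (Rm * G * Rm) j ≤ eigval (R * G * R) j := by
    intro j
    set g : Fin n → ℝ := fun l => q l / r l with hgdef
    have hg1 : ∀ l, |g l| ≤ 1 := fun l => by
      rw [hgdef, abs_of_pos (div_pos (hq0 l) (hrpos l))]
      exact (div_le_one (hrpos l)).mpr (hqr l)
    have h1 : (diagonal fun l => (g l : ℂ)) * R = Rm := by
      rw [hRdef, hRmdef, diagonal_mul_diagonal,
        show (fun l => ((g l : ℂ)) * ((r l : ℂ))) = (fun l => ((q l) : ℂ)) from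
          funext fun l => by
            rw [← Complex.ofReal_mul, hgdef]
            congr 1
            show (q l / r l) * r l = q l
            exact div_mul_cancel₀ (q l) (ne_of_gt (hrpos l))]
    have h2 : R * (diagonal fun l => (g l : ℂ)) = Rm := by
      rw [hRdef, hRmdef, diagonal_mul_diagonal,
        show (fun l => ((r l : ℂ)) * ((g l : ℂ))) = (fun l => ((q l) : ℂ)) from
          funext fun l => by
            rw [← Complex.ofReal_mul, hgdef]
            congr 1
            show r l * (q l / r l) = q l
            rw [mul_comm]
            exact div_mul_cancel₀ (q l) (ne_of_gt (hrpos l))]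
    have hCRC : (diagonal fun l => (g l : ℂ)) * (R * G * R) * (diagonal fun l => (g l : ℂ))
        = Rm * G * Rm := by
      calc (diagonal fun l => (g l : ℂ)) * (R * G * R) * (diagonal fun l => (g l : ℂ))
          = ((diagonal fun l => (g l : ℂ)) * R) * G * (R * (diagonal fun l => (g l : ℂ))) := by
            simp only [Matrix.mul_assoc]
      _ = Rm * G * Rm := by rw [h1, h2]
    have key := eigval_diag_conj_le hRGRh hRGRpsd g 1 hg1 j
    rw [hCRC] at key
    simpa using key
  -- the ε-perturbed inequality
  set sel : Finset (Fin n) := Finset.image i Finset.univ with hsel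
  have hiinj : Function.Injective i := hi.injective
  have hselcard : sel.card = k := by
    rw [hsel, Finset.card_image_of_injective _ hiinj, Finset.card_univ, Fintype.card_fin]
  have hprodsel : ∀ F : Fin n → ℝ, ∏ j ∈ sel, F j = ∏ t, F (i t) := by
    intro F
    rw [hsel, Finset.prod_image (fun a _ b _ h => hiinj h)]
  set Pk : ℝ := ∏ t : Fin k, p (Fin.rev (Fin.castLE hkn t)) with hPk
  have hPkpos : 0 < Pk := Finset.prod_pos (fun t _ => hp _)
  set K : ℝ := ∏ j, (q j)^2 with hK
  -- step 4e : K = (c^2)^(n-k) * Pk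
  have himg : Finset.image (fun t : Fin k => Fin.rev (Fin.castLE hkn t)) Finset.univ
      = Finset.Ici jc := by
    apply Finset.ext
    intro j
    simp only [Finset.mem_image, Finset.mem_univ, true_and, Finset.mem_Ici]
    constructor
    · rintro ⟨t, rfl⟩
      rw [Fin.le_def]
      simp only [Fin.val_rev, Fin.coe_castLE]
      have := t.isLt
      show n - k ≤ n - (t.val + 1)
      omega
    · intro hj
      rw [Fin.le_def] at hj
      simp only [hjc] at hj
      have hjlt := j.isLt
      refine ⟨⟨n - 1 - j.val, by omega⟩, ?_⟩
      apply Fin.ext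
      simp only [Fin.val_rev, Fin.coe_castLE]
      omega
  have hPk_Ici : Pk = ∏ j ∈ Finset.Ici jc, p j := by
    rw [← himg, Finset.prod_image (fun a _ b _ h => by
      have : Fin.castLE hkn a = Fin.castLE hkn b := Fin.rev_injective h
      exact Fin.castLE_injective hkn this)]
  have hq_Ici : ∀ j ∈ Finset.Ici jc, (q j)^2 = p j := by
    intro j hj
    have hle : p j ≤ p jc := hpa (Finset.mem_Ici.mp hj)
    have : r j ≤ c := by
      rw [hcdef, hrdef]
      exact Real.sqrt_le_sqrt hle
    rw [hqdef]
    simp only [min_eq_right this]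
    rw [hrdef, Real.sq_sqrt (hp j).le]
  have hq_Iio : ∀ j ∈ Finset.Iio jc, (q j)^2 = c^2 := by
    intro j hj
    have hle : p jc ≤ p j := hpa (le_of_lt (Finset.mem_Iio.mp hj))
    have : c ≤ r j := by
      rw [hcdef, hrdef]
      exact Real.sqrt_le_sqrt hle
    rw [hqdef]
    simp only [min_eq_left this]
  have hcardIio : (Finset.Iio jc).card = n - k := by
    rw [Fin.card_Iio]
  have hcompl : (Finset.Ici jc)ᶜ = Finset.Iio jc := by
    apply Finset.ext
    intro j
    simp [Finset.mem_compl, Finset.mem_Ici, Finset.mem_Iio, not_le]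
  have h4e : K = (c^2)^(n-k) * Pk := by
    rw [hK, ← Finset.prod_mul_prod_compl (Finset.Ici jc) (fun j => (q j)^2), hcompl]
    rw [Finset.prod_congr rfl hq_Ici, Finset.prod_congr rfl hq_Iio, Finset.prod_const,
      hcardIio, hPk_Ici]
    ring
  have hGev : ∀ j, 0 ≤ eigval G j := eigval_nonneg hG hGpsd
  have hRmGRm0 : ∀ j, 0 ≤ eigval (Rm * G * Rm) j := eigval_nonneg hRmGRmh hRmGRmpsd
  -- ε-perturbed inequality
  have hEps : ∀ ε : ℝ, 0 < ε →
      (∏ t, eigval G (i t)) * Pk ≤ ∏ t, (eigval (Rm * G * Rm) (i t) + ε * c^2) := by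
    intro ε hε
    set Gε := G + ((ε : ℝ) : ℂ) • 1 with hGε
    have hsmulh : ∀ s : ℝ, (((s : ℝ) : ℂ) • (1 : Matrix (Fin n) (Fin n) ℂ)).IsHermitian := by
      intro s
      unfold Matrix.IsHermitian
      rw [conjTranspose_smul, conjTranspose_one]
      congr 1
      simp [Complex.star_def, Complex.conj_ofReal]
    have hGεh : Gε.IsHermitian := hG.add (hsmulh ε)
    have hrayGε : ∀ x, ray Gε x = ray G x + ε * nsq x := fun x => by
      rw [hGε, ray_add, ray_smul_one]
    have hGεpsd : ∀ x, 0 ≤ ray Gε x := fun x => by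
      rw [hrayGε]
      have h1 := hGpsd x
      have h2 := nsq_nonneg x
      nlinarith
    have hbε : ∀ j, eigval Gε j = eigval G j + ε := fun j => eigval_add_smul_one hG ε j
    have hbεpos : ∀ j, 0 < eigval Gε j := fun j => by
      rw [hbε]
      have := hGev j
      linarith
    have hRmx : ∀ x : Fin n → ℂ, x ≠ 0 → (Rm *ᵥ x) ≠ 0 := by
      intro x hx h0
      apply hx
      funext l
      have h1 : (Rm *ᵥ x) l = 0 := by rw [h0]; rfl
      rw [hRmdef, mulVec_diagonal] at h1
      have hql : ((q l : ℂ)) ≠ 0 := by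
        simp only [ne_eq, Complex.ofReal_eq_zero]
        exact ne_of_gt (hq0 l)
      exact (mul_eq_zero.mp h1).resolve_left hql
    have hRmGεRmh : (Rm * Gε * Rm).IsHermitian := by
      rw [hRmdef]; exact isHermitian_diag_conj q hGεh
    have hapos : ∀ j, 0 < eigval (Rm * Gε * Rm) j := by
      intro j
      apply eigval_pos hRmGεRmh
      intro x hx
      rw [hRmdef, ray_diag_conj, ← hRmdef, hrayGε]
      have h1 := hGpsd (Rm *ᵥ x)
      have h2 := nsq_pos_of_ne (hRmx x hx)
      nlinarith
    have hstep3 : ∀ j, eigval (Rm * Gε * Rm) j ≤ eigval (Rm * G * Rm) j + ε * c^2 := by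
      intro j
      have hBh : (Rm * G * Rm + ((ε * c^2 : ℝ) : ℂ) • 1).IsHermitian :=
        hRmGRmh.add (hsmulh (ε * c^2))
      have hle : ∀ x, ray (Rm * Gε * Rm) x
          ≤ ray (Rm * G * Rm + ((ε * c^2 : ℝ) : ℂ) • 1) x := by
        intro x
        rw [ray_add, ray_smul_one]
        have e1 : ray (Rm * Gε * Rm) x = ray G (Rm *ᵥ x) + ε * nsq (Rm *ᵥ x) := by
          rw [hRmdef, ray_diag_conj, ← hRmdef, hrayGε]
        have e2 : ray (Rm * G * Rm) x = ray G (Rm *ᵥ x) := by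
          rw [hRmdef, ray_diag_conj, ← hRmdef]
        have e3 : nsq (Rm *ᵥ x) ≤ c^2 * nsq x := by
          rw [hRmdef]; exact nsq_diag_le hqc x
        rw [e1, e2]
        nlinarith
      have hmono := eigval_mono hRmGεRmh hBh hle j
      rw [eigval_add_smul_one hRmGRmh (ε * c^2) j] at hmono
      exact hmono
    have h4b : ∀ j, eigval (Rm * Gε * Rm) j ≤ c^2 * eigval Gε j := by
      intro j
      have h := eigval_diag_conj_le hGεh hGεpsd q c hqc j
      rw [← hRmdef] at h
      exact h
    have h4a : ∏ j, eigval (Rm * Gε * Rm) j = K * ∏ j, eigval Gε j := by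
      have hdRm : Rm.det = ∏ j, ((q j : ℂ)) := by rw [hRmdef, det_diagonal]
      have hdet3 : (Rm * Gε * Rm).det
          = (∏ j, ((q j : ℂ))) * (∏ j, ((eigval Gε j : ℝ) : ℂ)) * (∏ j, ((q j : ℂ))) := by
        rw [det_mul, det_mul, hdRm, det_eq_prod_eigval hGεh]
      have hsq : ∏ j, ((q j : ℂ))^2 = (∏ j, ((q j) : ℂ)) * ∏ j, ((q j) : ℂ) := by
        rw [← Finset.prod_mul_distrib]
        exact Finset.prod_congr rfl (fun j _ => pow_two _)
      have hC : ((∏ j, eigval (Rm * Gε * Rm) j : ℝ) : ℂ)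
          = ((K * ∏ j, eigval Gε j : ℝ) : ℂ) := by
        push_cast
        rw [← det_eq_prod_eigval hRmGεRmh, hdet3, hK]
        push_cast
        rw [hsq]
        ring
      exact_mod_cast hC
    have hcompl_card : selᶜ.card = n - k := by
      rw [Finset.card_compl, hselcard, Fintype.card_fin]
    have hac : ∏ j ∈ selᶜ, eigval (Rm * Gε * Rm) j
        ≤ (c^2)^(n-k) * ∏ j ∈ selᶜ, eigval Gε j := by
      calc ∏ j ∈ selᶜ, eigval (Rm * Gε * Rm) j ≤ ∏ j ∈ selᶜ, (c^2 * eigval Gε j) :=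
            Finset.prod_le_prod (fun j _ => (hapos j).le) (fun j _ => h4b j)
      _ = (c^2)^(n-k) * ∏ j ∈ selᶜ, eigval Gε j := by
            rw [Finset.prod_mul_distrib, Finset.prod_const, hcompl_card]
    have hselpos_a : 0 < ∏ j ∈ sel, eigval (Rm * Gε * Rm) j :=
      Finset.prod_pos (fun j _ => hapos j)
    have h1 : (∏ j ∈ sel, eigval (Rm * Gε * Rm) j) * (∏ j ∈ selᶜ, eigval (Rm * Gε * Rm) j)
        = K * ((∏ j ∈ sel, eigval Gε j) * (∏ j ∈ selᶜ, eigval Gε j)) := by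
      rw [Finset.prod_mul_prod_compl sel (fun j => eigval (Rm * Gε * Rm) j),
        Finset.prod_mul_prod_compl sel (fun j => eigval Gε j)]
      exact h4a
    have hmain : Pk * ∏ j ∈ sel, eigval Gε j ≤ ∏ j ∈ sel, eigval (Rm * Gε * Rm) j := by
      set u := ∏ j ∈ sel, eigval (Rm * Gε * Rm) j with hu
      set v := ∏ j ∈ selᶜ, eigval (Rm * Gε * Rm) j with hv
      set sb := ∏ j ∈ sel, eigval Gε j with hsb
      set w := ∏ j ∈ selᶜ, eigval Gε j with hw
      have hwpos : 0 < w := Finset.prod_pos (fun j _ => hbεpos j)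
      have h2 : u * v ≤ u * ((c^2)^(n-k) * w) :=
        mul_le_mul_of_nonneg_left hac hselpos_a.le
      rw [h1, h4e] at h2
      have h3 : (Pk * sb) * ((c^2)^(n-k) * w) ≤ u * ((c^2)^(n-k) * w) := by
        calc (Pk * sb) * ((c^2)^(n-k) * w) = (c^2)^(n-k) * Pk * (sb * w) := by ring
        _ ≤ u * ((c^2)^(n-k) * w) := h2
      exact le_of_mul_le_mul_right h3 (by positivity)
    have hchain1 : (∏ t, eigval G (i t)) * Pk ≤ Pk * ∏ j ∈ sel, eigval Gε j := by
      rw [hprodsel (fun j => eigval Gε j), mul_comm]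
      apply mul_le_mul_of_nonneg_left ?_ hPkpos.le
      exact Finset.prod_le_prod (fun t _ => hGev _) (fun t _ => by
        rw [hbε]
        linarith)
    have hchain2 : ∏ j ∈ sel, eigval (Rm * Gε * Rm) j
        ≤ ∏ t, (eigval (Rm * G * Rm) (i t) + ε * c^2) := by
      rw [hprodsel (fun j => eigval (Rm * Gε * Rm) j)]
      exact Finset.prod_le_prod (fun t _ => (hapos _).le) (fun t _ => hstep3 _)
    exact le_trans (le_trans hchain1 hmain) hchain2
  -- take the limit ε → 0⁺
  have hcont : Continuous (fun ε : ℝ => ∏ t : Fin k, (eigval (Rm * G * Rm) (i t) + ε * c^2)) := by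
    apply continuous_finset_prod
    intro t _
    exact continuous_const.add (continuous_id.mul continuous_const)
  have hF := (hcont.tendsto 0).mono_left (nhdsWithin_le_nhds (s := Set.Ioi (0:ℝ)))
  have hlim : (∏ t, eigval G (i t)) * Pk
      ≤ ∏ t : Fin k, (eigval (Rm * G * Rm) (i t) + 0 * c^2) :=
    ge_of_tendsto hF (Filter.eventually_of_mem self_mem_nhdsWithin
      (fun ε hε => hEps ε (Set.mem_Ioi.mp hε)))
  have hlim' : (∏ t, eigval G (i t)) * Pk ≤ ∏ t, eigval (Rm * G * Rm) (i t) := by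
    calc (∏ t, eigval G (i t)) * Pk
        ≤ ∏ t : Fin k, (eigval (Rm * G * Rm) (i t) + 0 * c^2) := hlim
    _ = ∏ t, eigval (Rm * G * Rm) (i t) := by
        apply Finset.prod_congr rfl
        intro t _
        ring
  calc (∏ t, eigval G (i t)) * Pk ≤ ∏ t, eigval (Rm * G * Rm) (i t) := hlim'
  _ ≤ ∏ t, eigval (R * G * R) (i t) :=
      Finset.prod_le_prod (fun t _ => hRmGRm0 _) (fun t _ => hB _)
  _ = ∏ t, eigval (Y * diagonal (fun j => (p j : ℂ)) * Yᴴ) (i t) := by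
      rw [hA1]

end Core

section Assemble
variable {W : Matrix (Fin n) (Fin n) ℂ}

lemma conj_diag_reindex (W : Matrix (Fin n) (Fin n) ℂ) (g : Fin n → ℂ) (e : Equiv.Perm (Fin n)) :
    (W.submatrix id ⇑e) * diagonal (g ∘ ⇑e) * (W.submatrix id ⇑e)ᴴ
      = W * diagonal g * Wᴴ := by
  rw [conjTranspose_submatrix, ← submatrix_diagonal_equiv g e,
    Matrix.submatrix_mul_equiv W (diagonal g) id e ⇑e,
    Matrix.submatrix_mul_equiv (W * diagonal g) Wᴴ id e id, submatrix_id_id]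

lemma submatrix_unitary_left (hW1 : Wᴴ * W = 1) (e : Equiv.Perm (Fin n)) :
    (W.submatrix id ⇑e)ᴴ * (W.submatrix id ⇑e) = 1 := by
  rw [conjTranspose_submatrix,
    (Matrix.submatrix_mul Wᴴ W ⇑e id ⇑e Function.bijective_id).symm, hW1, submatrix_one_equiv]

lemma submatrix_unitary_right (hW2 : W * Wᴴ = 1) (e : Equiv.Perm (Fin n)) :
    (W.submatrix id ⇑e) * (W.submatrix id ⇑e)ᴴ = 1 := by
  rw [conjTranspose_submatrix, Matrix.submatrix_mul_equiv W Wᴴ id e id, hW2, submatrix_id_id]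

lemma ray_one (x : Fin n → ℂ) : ray (1 : Matrix (Fin n) (Fin n) ℂ) x = nsq x := by
  unfold ray nsq
  rw [one_mulVec]

end Assemble
end ProdEig


open ProdEig in
theorem prod_eig_Q_ge (n k : ℕ) (hn : 0 < n) (hk : 0 < k) (hkn : k ≤ n)
    (A B : Matrix (Fin n) (Fin n) ℂ)
    (Q : Matrix (Fin n) (Fin n) ℂ)
    (hQ : Q = (1 - Aᴴ * B) * (1 + Bᴴ * B)⁻¹ * (1 - Aᴴ * B)ᴴ)
    (i : Fin k → Fin n) (hi : StrictMono i) :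
    ∏ t : Fin k, eigval Q (i t) ≥
      ∏ t : Fin k, singval (1 - Aᴴ * B) (i t) ^ 2 /
        (1 + eigval (Bᴴ * B) (Fin.castLE hkn t)) := by
  classical
  subst hQ
  set X : Matrix (Fin n) (Fin n) ℂ := 1 - Aᴴ * B with hX
  set M : Matrix (Fin n) (Fin n) ℂ := 1 + Bᴴ * B with hM
  have hBB : (Bᴴ * B).IsHermitian := isHermitian_conjTranspose_mul_self B
  have hXX : (Xᴴ * X).IsHermitian := isHermitian_conjTranspose_mul_self X
  have hMh : M.IsHermitian := by
    unfold Matrix.IsHermitian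
    rw [hM, conjTranspose_add, conjTranspose_one, hBB.eq]
  have hrayM : ∀ x, ray M x = nsq x + nsq (B *ᵥ x) := fun x => by
    rw [hM, ray_add, ray_one, ray_conjT_mul]
  have hMpos : ∀ j, 0 < eigval M j := by
    apply eigval_pos hMh
    intro x hx
    rw [hrayM]
    have h1 := nsq_pos_of_ne hx
    have h2 := nsq_nonneg (B *ᵥ x)
    linarith
  -- eigenvalues of M are 1 + eigenvalues of BᴴB
  have hMeig : ∀ j, eigval M j = eigval (Bᴴ * B) j + 1 := by
    intro j
    have hM1 : M = Bᴴ * B + ((1 : ℝ) : ℂ) • 1 := by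
      rw [hM, Complex.ofReal_one, one_smul, add_comm]
    rw [hM1, eigval_add_smul_one hBB]
  -- sorted decomposition of M and of its inverse
  obtain ⟨Wm, hWm1, hWm2, hdM⟩ := sortedSpec hMh
  set gm : Fin n → ℂ := fun j => (((eigval M j)⁻¹ : ℝ) : ℂ) with hgm
  have hPdec0 : M⁻¹ = Wm * diagonal gm * Wmᴴ := by
    apply inv_eq_right_inv
    conv_lhs => rw [hdM]
    simp only [Matrix.mul_assoc]
    rw [← Matrix.mul_assoc Wmᴴ Wm, hWm1, one_mul,
      ← Matrix.mul_assoc (diagonal fun j => ((eigval M j : ℝ) : ℂ)) (diagonal gm),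
      diagonal_mul_diagonal,
      show (fun j => ((eigval M j : ℝ) : ℂ) * gm j) = fun _ => (1 : ℂ) from
        funext fun j => by
          rw [hgm, ← Complex.ofReal_mul, mul_inv_cancel₀ (ne_of_gt (hMpos j)),
            Complex.ofReal_one],
      diagonal_one, one_mul, hWm2]
  set W' : Matrix (Fin n) (Fin n) ℂ := Wm.submatrix id ⇑(Fin.revPerm (n := n)) with hW'
  have hW'1 : W'ᴴ * W' = 1 := submatrix_unitary_left hWm1 _
  have hW'2 : W' * W'ᴴ = 1 := submatrix_unitary_right hWm2 _
  set p' : Fin n → ℝ := fun j => (eigval M (Fin.rev j))⁻¹ with hp'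
  have hp'pos : ∀ j, 0 < p' j := fun j => inv_pos.mpr (hMpos _)
  have hp'anti : Antitone p' := by
    intro a b hab
    rw [hp']
    have h1 : Fin.rev b ≤ Fin.rev a := Fin.rev_le_rev.mpr hab
    have h2 : eigval M (Fin.rev a) ≤ eigval M (Fin.rev b) := eigval_antitone hMh h1
    exact inv_anti₀ (hMpos _) h2
  have hPdec : M⁻¹ = W' * diagonal (fun j => (p' j : ℂ)) * W'ᴴ := by
    rw [hPdec0, ← conj_diag_reindex Wm gm (Fin.revPerm (n := n)), hW']
    congr 1
  -- identify Q
  have hQeq : X * M⁻¹ * Xᴴ = (X * W') * diagonal (fun j => (p' j : ℂ)) * (X * W')ᴴ := by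
    rw [hPdec, conjTranspose_mul]
    simp only [Matrix.mul_assoc]
  -- identify the singular values
  have hYY : eigval ((X * W')ᴴ * (X * W')) = eigval (Xᴴ * X) := by
    have h1 : (X * W')ᴴ * (X * W') = W'ᴴ * (Xᴴ * X) * W' := by
      rw [conjTranspose_mul]
      simp only [Matrix.mul_assoc]
    rw [h1]
    funext j
    exact eigval_conj_unitary hXX hW'1 hW'2 j
  have hXX0 : ∀ j, 0 ≤ eigval (Xᴴ * X) j :=
    eigval_nonneg hXX (fun x => by rw [ray_conjT_mul]; exact nsq_nonneg _)
  -- main computation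
  have hcore := core k hk hkn (X * W') p' hp'pos hp'anti i hi
  rw [hYY] at hcore
  rw [ge_iff_le]
  have hRHS : ∏ t : Fin k, singval X (i t) ^ 2 / (1 + eigval (Bᴴ * B) (Fin.castLE hkn t))
      = (∏ t, eigval (Xᴴ * X) (i t)) * (∏ t : Fin k, p' (Fin.rev (Fin.castLE hkn t))) := by
    rw [← Finset.prod_mul_distrib]
    apply Finset.prod_congr rfl
    intro t _
    have h1 : singval X (i t) ^ 2 = eigval (Xᴴ * X) (i t) := by
      unfold singval
      exact Real.sq_sqrt (hXX0 (i t))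
    have h2 : p' (Fin.rev (Fin.castLE hkn t)) = (eigval M (Fin.castLE hkn t))⁻¹ := by
      rw [hp']
      simp [Fin.rev_rev]
    have h3 : 1 + eigval (Bᴴ * B) (Fin.castLE hkn t) = eigval M (Fin.castLE hkn t) := by
      rw [hMeig]; ring
    rw [h1, h2, h3, div_eq_mul_inv]
  rw [hRHS]
  calc (∏ t, eigval (Xᴴ * X) (i t)) * (∏ t : Fin k, p' (Fin.rev (Fin.castLE hkn t)))
      ≤ ∏ t, eigval ((X * W') * diagonal (fun j => (p' j : ℂ)) * (X * W')ᴴ) (i t) := hcore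
  _ = ∏ t, eigval (X * M⁻¹ * Xᴴ) (i t) := by rw [← hQeq]
end
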